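/- arXiv:1603.09609 — 3 statements merged into one kernel-verified Lean document; each statement's English description precedes it below -/
import Mathlib

section
/- Strong TRO equivalence of operator spaces is transitive: if X = cl span(M₂ Y M₁*), Y = cl span(M₂* X M₁) = cl span(N₂ Z N₁*), and Z = cl span(N₂* Y N₁) for TROs Mᵢ, Nᵢ (i=1,2), then X = cl span(L₂ Z L₁*) and Z = cl span(L₂* X L₁), where Lᵢ = cl span(Mᵢ Dᵢ Nᵢ) and Dᵢ is the C*-algebra generated by Mᵢ* Mᵢ ∪ Nᵢ Nᵢ*. -/
noncomputable section
open ContinuousLinearMap Filter Topology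

/-- Closed linear span of a set. -/
def clSpan {E : Type*} [NormedAddCommGroup E] [NormedSpace ℂ E] (S : Set E) : Set E :=
  closure (Submodule.span ℂ S : Set E)

/-- Set of products of operators from two sets. -/
def setMul {H₁ H₂ H₃ : Type*} [NormedAddCommGroup H₁] [NormedSpace ℂ H₁]
    [NormedAddCommGroup H₂] [NormedSpace ℂ H₂] [NormedAddCommGroup H₃] [NormedSpace ℂ H₃]
    (S : Set (H₂ →L[ℂ] H₃)) (T : Set (H₁ →L[ℂ] H₂)) : Set (H₁ →L[ℂ] H₃) :=
  {x | ∃ s ∈ S, ∃ t ∈ T, x = s.comp t}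

/-- Set of adjoints. -/
def adjSet {H K : Type*} [NormedAddCommGroup H] [InnerProductSpace ℂ H] [CompleteSpace H]
    [NormedAddCommGroup K] [InnerProductSpace ℂ K] [CompleteSpace K]
    (S : Set (H →L[ℂ] K)) : Set (K →L[ℂ] H) :=
  {x | ∃ s ∈ S, x = ContinuousLinearMap.adjoint s}

/-- A ternary ring of operators: a norm-closed subspace `M ⊆ B(H,K)` with `M M* M ⊆ M`. -/
structure IsTRO {H K : Type*} [NormedAddCommGroup H] [InnerProductSpace ℂ H] [CompleteSpace H]
    [NormedAddCommGroup K] [InnerProductSpace ℂ K] [CompleteSpace K]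
    (M : Set (H →L[ℂ] K)) : Prop where
  isClosed : IsClosed M
  zero_mem : (0 : H →L[ℂ] K) ∈ M
  add_mem : ∀ x ∈ M, ∀ y ∈ M, x + y ∈ M
  smul_mem : ∀ (c : ℂ), ∀ x ∈ M, c • x ∈ M
  ternary : ∀ x ∈ M, ∀ y ∈ M, ∀ z ∈ M,
    x.comp ((ContinuousLinearMap.adjoint y).comp z) ∈ M

/-- A (concrete) operator space: a norm-closed linear subspace of `B(H,K)`. -/
def IsOperatorSpace {H K : Type*} [NormedAddCommGroup H] [NormedSpace ℂ H]
    [NormedAddCommGroup K] [NormedSpace ℂ K] (X : Set (H →L[ℂ] K)) : Prop :=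
  IsClosed X ∧ ∃ p : Submodule ℂ (H →L[ℂ] K), X = ↑p

section Toolkit

variable {E H₁ H₂ H₃ H₄ : Type*}
  [NormedAddCommGroup E] [NormedSpace ℂ E]
  [NormedAddCommGroup H₁] [NormedSpace ℂ H₁]
  [NormedAddCommGroup H₂] [NormedSpace ℂ H₂]
  [NormedAddCommGroup H₃] [NormedSpace ℂ H₃]
  [NormedAddCommGroup H₄] [NormedSpace ℂ H₄]

lemma clSpan_eq_coe (S : Set E) :
    clSpan S = ((Submodule.span ℂ S).topologicalClosure : Set E) := by
  simp [clSpan, Submodule.topologicalClosure_coe]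

lemma isClosed_clSpan (S : Set E) : IsClosed (clSpan S) := isClosed_closure

lemma subset_clSpan (S : Set E) : S ⊆ clSpan S :=
  (Submodule.subset_span (R := ℂ)).trans subset_closure

lemma clSpan_mono {S T : Set E} (h : S ⊆ T) : clSpan S ⊆ clSpan T :=
  closure_mono (Submodule.span_mono h)

lemma clSpan_min {S T : Set E} (h : S ⊆ clSpan T) : clSpan S ⊆ clSpan T := by
  rw [clSpan_eq_coe T] at h ⊢
  refine closure_minimal ?_ (Submodule.isClosed_topologicalClosure _)
  exact_mod_cast Submodule.span_le.mpr h

lemma clSpan_clSpan (S : Set E) : clSpan (clSpan S) = clSpan S :=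
  Set.Subset.antisymm (clSpan_min (le_refl _)) (clSpan_mono (subset_clSpan S))

lemma setMul_assoc (A : Set (H₃ →L[ℂ] H₄)) (B : Set (H₂ →L[ℂ] H₃)) (C : Set (H₁ →L[ℂ] H₂)) :
    setMul (setMul A B) C = setMul A (setMul B C) := by
  ext x
  constructor
  · rintro ⟨-, ⟨a, ha, b, hb, rfl⟩, c, hc, rfl⟩
    exact ⟨a, ha, b.comp c, ⟨b, hb, c, hc, rfl⟩, (ContinuousLinearMap.comp_assoc _ _ _).symm⟩
  · rintro ⟨a, ha, -, ⟨b, hb, c, hc, rfl⟩, rfl⟩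
    exact ⟨a.comp b, ⟨a, ha, b, hb, rfl⟩, c, hc, ContinuousLinearMap.comp_assoc _ _ _⟩

lemma setMul_mono {A A' : Set (H₂ →L[ℂ] H₃)} {B B' : Set (H₁ →L[ℂ] H₂)}
    (hA : A ⊆ A') (hB : B ⊆ B') : setMul A B ⊆ setMul A' B' := by
  rintro x ⟨a, ha, b, hb, rfl⟩
  exact ⟨a, hA ha, b, hB hb, rfl⟩

lemma clSpan_setMul_left (S : Set (H₂ →L[ℂ] H₃)) (T : Set (H₁ →L[ℂ] H₂)) :
    clSpan (setMul (clSpan S) T) = clSpan (setMul S T) := by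
  refine Set.Subset.antisymm (clSpan_min ?_)
    (clSpan_mono (setMul_mono (subset_clSpan S) le_rfl))
  rintro x ⟨s, hs, t, ht, rfl⟩
  set f := (ContinuousLinearMap.compL ℂ H₁ H₂ H₃).flip t with hf
  have h1 : Submodule.map f.toLinearMap (Submodule.span ℂ S) ≤ Submodule.span ℂ (setMul S T) := by
    rw [Submodule.map_span]
    refine Submodule.span_mono ?_
    rintro x ⟨a, ha, rfl⟩
    exact ⟨a, ha, t, ht, rfl⟩
  have h2 : Set.MapsTo f (Submodule.span ℂ S : Set _)
      (Submodule.span ℂ (setMul S T) : Set _) := fun a ha => h1 ⟨a, ha, rfl⟩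
  have h3 := map_mem_closure f.continuous hs h2
  simpa [hf, clSpan] using h3

lemma clSpan_setMul_right (S : Set (H₂ →L[ℂ] H₃)) (T : Set (H₁ →L[ℂ] H₂)) :
    clSpan (setMul S (clSpan T)) = clSpan (setMul S T) := by
  refine Set.Subset.antisymm (clSpan_min ?_)
    (clSpan_mono (setMul_mono le_rfl (subset_clSpan T)))
  rintro x ⟨s, hs, t, ht, rfl⟩
  set f := ContinuousLinearMap.compL ℂ H₁ H₂ H₃ s with hf
  have h1 : Submodule.map f.toLinearMap (Submodule.span ℂ T) ≤ Submodule.span ℂ (setMul S T) := by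
    rw [Submodule.map_span]
    refine Submodule.span_mono ?_
    rintro x ⟨a, ha, rfl⟩
    exact ⟨s, hs, a, ha, rfl⟩
  have h2 : Set.MapsTo f (Submodule.span ℂ T : Set _)
      (Submodule.span ℂ (setMul S T) : Set _) := fun a ha => h1 ⟨a, ha, rfl⟩
  have h3 := map_mem_closure f.continuous ht h2
  simpa [hf, clSpan] using h3

lemma clSpan_setMul_congr_left {S S' : Set (H₂ →L[ℂ] H₃)} (T : Set (H₁ →L[ℂ] H₂))
    (h : clSpan S = clSpan S') :
    clSpan (setMul S T) = clSpan (setMul S' T) := by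
  rw [← clSpan_setMul_left S T, h, clSpan_setMul_left]

lemma clSpan_setMul_congr_right (S : Set (H₂ →L[ℂ] H₃)) {T T' : Set (H₁ →L[ℂ] H₂)}
    (h : clSpan T = clSpan T') :
    clSpan (setMul S T) = clSpan (setMul S T') := by
  rw [← clSpan_setMul_right S T, h, clSpan_setMul_right]

/-- Replace the middle factor of a triple product by its closed span. -/
lemma clSpan_setMul_middle (A : Set (H₃ →L[ℂ] H₄)) (B : Set (H₂ →L[ℂ] H₃))
    (C : Set (H₁ →L[ℂ] H₂)) :
    clSpan (setMul A (setMul B C)) = clSpan (setMul A (setMul (clSpan B) C)) :=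
  clSpan_setMul_congr_right A (clSpan_setMul_left B C).symm

end Toolkit

section AdjToolkit

variable {H K G : Type*}
  [NormedAddCommGroup H] [InnerProductSpace ℂ H] [CompleteSpace H]
  [NormedAddCommGroup K] [InnerProductSpace ℂ K] [CompleteSpace K]
  [NormedAddCommGroup G] [InnerProductSpace ℂ G] [CompleteSpace G]

lemma adjSet_eq_image (S : Set (H →L[ℂ] K)) :
    adjSet S = (ContinuousLinearMap.adjoint : (H →L[ℂ] K) ≃ₗᵢ⋆[ℂ] (K →L[ℂ] H)) '' S := by
  ext x
  constructor
  · rintro ⟨s, hs, rfl⟩; exact ⟨s, hs, rfl⟩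
  · rintro ⟨s, hs, rfl⟩; exact ⟨s, hs, rfl⟩

lemma adjSet_clSpan (S : Set (H →L[ℂ] K)) : adjSet (clSpan S) = clSpan (adjSet S) := by
  rw [adjSet_eq_image, adjSet_eq_image, clSpan, clSpan]
  have himg : (⇑(ContinuousLinearMap.adjoint : (H →L[ℂ] K) ≃ₗᵢ⋆[ℂ] (K →L[ℂ] H)) ''
      (Submodule.span ℂ S : Set _))
      = ((Submodule.span ℂ
          (⇑(ContinuousLinearMap.adjoint : (H →L[ℂ] K) ≃ₗᵢ⋆[ℂ] (K →L[ℂ] H)) '' S)) :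
        Set (K →L[ℂ] H)) := by
    rw [show (⇑(ContinuousLinearMap.adjoint : (H →L[ℂ] K) ≃ₗᵢ⋆[ℂ] (K →L[ℂ] H)) ''
        (Submodule.span ℂ S : Set _))
      = (Submodule.map
          ((ContinuousLinearMap.adjoint :
            (H →L[ℂ] K) ≃ₗᵢ⋆[ℂ] (K →L[ℂ] H)).toLinearEquiv.toLinearMap)
          (Submodule.span ℂ S) : Set _) from rfl, Submodule.map_span]
    rfl
  have hcl := (ContinuousLinearMap.adjoint :
    (H →L[ℂ] K) ≃ₗᵢ⋆[ℂ] (K →L[ℂ] H)).toHomeomorph.image_closure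
      ((Submodule.span ℂ S : Set (H →L[ℂ] K)))
  simp only [LinearIsometryEquiv.coe_toHomeomorph] at hcl
  rw [hcl, himg]

lemma adjSet_setMul (S : Set (K →L[ℂ] G)) (T : Set (H →L[ℂ] K)) :
    adjSet (setMul S T) = setMul (adjSet T) (adjSet S) := by
  ext x
  constructor
  · rintro ⟨-, ⟨s, hs, t, ht, rfl⟩, rfl⟩
    exact ⟨ContinuousLinearMap.adjoint t, ⟨t, ht, rfl⟩, ContinuousLinearMap.adjoint s,
      ⟨s, hs, rfl⟩, ContinuousLinearMap.adjoint_comp s t⟩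
  · rintro ⟨-, ⟨t, ht, rfl⟩, -, ⟨s, hs, rfl⟩, rfl⟩
    exact ⟨s.comp t, ⟨s, hs, t, ht, rfl⟩, (ContinuousLinearMap.adjoint_comp s t).symm⟩

lemma adjSet_eq_star_image (S : Set (H →L[ℂ] H)) : adjSet S = star '' S := by
  ext x
  constructor
  · rintro ⟨s, hs, rfl⟩; exact ⟨s, hs, (ContinuousLinearMap.star_eq_adjoint s).symm ▸ rfl⟩
  · rintro ⟨s, hs, rfl⟩; exact ⟨s, hs, ContinuousLinearMap.star_eq_adjoint s⟩

/-- TRO product rule `M (M* M) ⊆ M` at the level of sets. -/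
lemma IsTRO.setMul_sub {M : Set (H →L[ℂ] K)} (hM : IsTRO M) :
    setMul M (setMul (adjSet M) M) ⊆ M := by
  rintro x ⟨a, ha, -, ⟨-, ⟨b, hb, rfl⟩, c, hc, rfl⟩, rfl⟩
  exact hM.ternary a ha b hb c hc

/-- TRO product rule `M* (M M*) ⊆ M*` at the level of sets. -/
lemma IsTRO.setMul_sub' {M : Set (H →L[ℂ] K)} (hM : IsTRO M) :
    setMul (adjSet M) (setMul M (adjSet M)) ⊆ adjSet M := by
  rintro x ⟨-, ⟨a, ha, rfl⟩, -, ⟨b, hb, -, ⟨c, hc, rfl⟩, rfl⟩, rfl⟩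
  refine ⟨c.comp ((ContinuousLinearMap.adjoint b).comp a), hM.ternary c hc b hb a ha, ?_⟩
  rw [ContinuousLinearMap.adjoint_comp, ContinuousLinearMap.adjoint_comp,
    ContinuousLinearMap.adjoint_adjoint, ContinuousLinearMap.comp_assoc]

end AdjToolkit

section Absorb

variable {H₁ H₂ : Type*}
  [NormedAddCommGroup H₁] [InnerProductSpace ℂ H₁] [CompleteSpace H₁]
  [NormedAddCommGroup H₂] [InnerProductSpace ℂ H₂] [CompleteSpace H₂]

lemma absorb_left {Y : Set (H₁ →L[ℂ] H₂)} {G : Set (H₂ →L[ℂ] H₂)}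
    (hcl : IsClosed Y)
    (hzero : (0 : H₁ →L[ℂ] H₂) ∈ Y)
    (hadd : ∀ u ∈ Y, ∀ v ∈ Y, u + v ∈ Y)
    (hsmul : ∀ (c : ℂ), ∀ u ∈ Y, c • u ∈ Y)
    (hG : ∀ g ∈ G, ∀ y ∈ Y, g.comp y ∈ Y)
    (hGs : ∀ g ∈ G, ∀ y ∈ Y, (star g).comp y ∈ Y) :
    ∀ d ∈ closure (NonUnitalStarAlgebra.adjoin ℂ G : Set (H₂ →L[ℂ] H₂)),
      ∀ y ∈ Y, d.comp y ∈ Y := by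
  have key : ∀ d ∈ (NonUnitalStarAlgebra.adjoin ℂ G : Set (H₂ →L[ℂ] H₂)),
      (∀ y ∈ Y, d.comp y ∈ Y) ∧ (∀ y ∈ Y, (star d).comp y ∈ Y) := by
    intro d hd
    induction hd using NonUnitalStarAlgebra.adjoin_induction with
    | mem x hx => exact ⟨hG x hx, hGs x hx⟩
    | add x y hx hy ihx ihy =>
        refine ⟨fun z hz => ?_, fun z hz => ?_⟩
        · rw [ContinuousLinearMap.add_comp]
          exact hadd _ (ihx.1 z hz) _ (ihy.1 z hz)
        · rw [star_add, ContinuousLinearMap.add_comp]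
          exact hadd _ (ihx.2 z hz) _ (ihy.2 z hz)
    | zero =>
        refine ⟨fun z hz => ?_, fun z hz => ?_⟩
        · rw [ContinuousLinearMap.zero_comp]; exact hzero
        · rw [star_zero, ContinuousLinearMap.zero_comp]; exact hzero
    | mul x y hx hy ihx ihy =>
        refine ⟨fun z hz => ?_, fun z hz => ?_⟩
        · rw [show x * y = x.comp y from rfl, ContinuousLinearMap.comp_assoc]
          exact ihx.1 _ (ihy.1 z hz)
        · rw [star_mul, show star y * star x = (star y).comp (star x) from rfl,
            ContinuousLinearMap.comp_assoc]
          exact ihy.2 _ (ihx.2 z hz)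
    | smul r x hx ihx =>
        refine ⟨fun z hz => ?_, fun z hz => ?_⟩
        · rw [ContinuousLinearMap.smul_comp]
          exact hsmul _ _ (ihx.1 z hz)
        · rw [star_smul, ContinuousLinearMap.smul_comp]
          exact hsmul _ _ (ihx.2 z hz)
    | star x hx ihx =>
        refine ⟨ihx.2, fun z hz => ?_⟩
        rw [star_star]
        exact ihx.1 z hz
  intro d hd y hy
  set f := (ContinuousLinearMap.compL ℂ H₁ H₂ H₂).flip y with hf
  have h2 : Set.MapsTo f (NonUnitalStarAlgebra.adjoin ℂ G : Set (H₂ →L[ℂ] H₂)) Y :=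
    fun a ha => (key a ha).1 y hy
  have h3 := map_mem_closure f.continuous hd h2
  rw [hcl.closure_eq] at h3
  simpa [hf] using h3

lemma absorb_right {Y : Set (H₁ →L[ℂ] H₂)} {G : Set (H₁ →L[ℂ] H₁)}
    (hcl : IsClosed Y)
    (hzero : (0 : H₁ →L[ℂ] H₂) ∈ Y)
    (hadd : ∀ u ∈ Y, ∀ v ∈ Y, u + v ∈ Y)
    (hsmul : ∀ (c : ℂ), ∀ u ∈ Y, c • u ∈ Y)
    (hG : ∀ g ∈ G, ∀ y ∈ Y, y.comp g ∈ Y)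
    (hGs : ∀ g ∈ G, ∀ y ∈ Y, y.comp (star g) ∈ Y) :
    ∀ d ∈ closure (NonUnitalStarAlgebra.adjoin ℂ G : Set (H₁ →L[ℂ] H₁)),
      ∀ y ∈ Y, y.comp d ∈ Y := by
  have key : ∀ d ∈ (NonUnitalStarAlgebra.adjoin ℂ G : Set (H₁ →L[ℂ] H₁)),
      (∀ y ∈ Y, y.comp d ∈ Y) ∧ (∀ y ∈ Y, y.comp (star d) ∈ Y) := by
    intro d hd
    induction hd using NonUnitalStarAlgebra.adjoin_induction with
    | mem x hx => exact ⟨hG x hx, hGs x hx⟩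
    | add x y hx hy ihx ihy =>
        refine ⟨fun z hz => ?_, fun z hz => ?_⟩
        · rw [ContinuousLinearMap.comp_add]
          exact hadd _ (ihx.1 z hz) _ (ihy.1 z hz)
        · rw [star_add, ContinuousLinearMap.comp_add]
          exact hadd _ (ihx.2 z hz) _ (ihy.2 z hz)
    | zero =>
        refine ⟨fun z hz => ?_, fun z hz => ?_⟩
        · rw [ContinuousLinearMap.comp_zero]; exact hzero
        · rw [star_zero, ContinuousLinearMap.comp_zero]; exact hzero
    | mul x y hx hy ihx ihy =>
        refine ⟨fun z hz => ?_, fun z hz => ?_⟩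
        · rw [show x * y = x.comp y from rfl, ← ContinuousLinearMap.comp_assoc]
          exact ihy.1 _ (ihx.1 z hz)
        · rw [star_mul, show star y * star x = (star y).comp (star x) from rfl,
            ← ContinuousLinearMap.comp_assoc]
          exact ihx.2 _ (ihy.2 z hz)
    | smul r x hx ihx =>
        refine ⟨fun z hz => ?_, fun z hz => ?_⟩
        · rw [show z.comp (r • x) = r • z.comp x by simp]
          exact hsmul _ _ (ihx.1 z hz)
        · rw [star_smul, show z.comp ((star r : ℂ) • star x) = (star r : ℂ) • z.comp (star x) by simp]
          exact hsmul _ _ (ihx.2 z hz)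
    | star x hx ihx =>
        refine ⟨ihx.2, fun z hz => ?_⟩
        rw [star_star]
        exact ihx.1 z hz
  intro d hd y hy
  set f := ContinuousLinearMap.compL ℂ H₁ H₁ H₂ y with hf
  have h2 : Set.MapsTo f (NonUnitalStarAlgebra.adjoin ℂ G : Set (H₁ →L[ℂ] H₁)) Y :=
    fun a ha => (key a ha).1 y hy
  have h3 := map_mem_closure f.continuous hd h2
  rw [hcl.closure_eq] at h3
  simpa [hf] using h3

end Absorb

/-- Strong TRO equivalence is transitive, with explicit witnessing TROs
`Lᵢ = cl span(Mᵢ Dᵢ Nᵢ)`, where `Dᵢ` is the C*-algebra generated by `Mᵢ* Mᵢ ∪ Nᵢ Nᵢ*`. -/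
theorem strongTROEquiv_trans
    {K₁ K₂ H₁ H₂ W₁ W₂ : Type*}
    [NormedAddCommGroup K₁] [InnerProductSpace ℂ K₁] [CompleteSpace K₁]
    [NormedAddCommGroup K₂] [InnerProductSpace ℂ K₂] [CompleteSpace K₂]
    [NormedAddCommGroup H₁] [InnerProductSpace ℂ H₁] [CompleteSpace H₁]
    [NormedAddCommGroup H₂] [InnerProductSpace ℂ H₂] [CompleteSpace H₂]
    [NormedAddCommGroup W₁] [InnerProductSpace ℂ W₁] [CompleteSpace W₁]
    [NormedAddCommGroup W₂] [InnerProductSpace ℂ W₂] [CompleteSpace W₂]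
    (X : Set (K₁ →L[ℂ] K₂)) (Y : Set (H₁ →L[ℂ] H₂)) (Z : Set (W₁ →L[ℂ] W₂))
    (M₁ : Set (H₁ →L[ℂ] K₁)) (M₂ : Set (H₂ →L[ℂ] K₂))
    (N₁ : Set (W₁ →L[ℂ] H₁)) (N₂ : Set (W₂ →L[ℂ] H₂))
    (hM₁ : IsTRO M₁) (hM₂ : IsTRO M₂) (hN₁ : IsTRO N₁) (hN₂ : IsTRO N₂)
    (hX : X = clSpan (setMul (setMul M₂ Y) (adjSet M₁)))
    (hY : Y = clSpan (setMul (setMul (adjSet M₂) X) M₁))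
    (hY' : Y = clSpan (setMul (setMul N₂ Z) (adjSet N₁)))
    (hZ : Z = clSpan (setMul (setMul (adjSet N₂) Y) N₁))
    -- the C*-algebras `D₁`, `D₂` generated by `Mᵢ* Mᵢ ∪ Nᵢ Nᵢ*`
    (D₁ : Set (H₁ →L[ℂ] H₁)) (D₂ : Set (H₂ →L[ℂ] H₂))
    (hD₁ : D₁ = closure (NonUnitalStarAlgebra.adjoin ℂ
      (setMul (adjSet M₁) M₁ ∪ setMul N₁ (adjSet N₁)) : Set (H₁ →L[ℂ] H₁)))
    (hD₂ : D₂ = closure (NonUnitalStarAlgebra.adjoin ℂ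
      (setMul (adjSet M₂) M₂ ∪ setMul N₂ (adjSet N₂)) : Set (H₂ →L[ℂ] H₂))) :
    X = clSpan (setMul (setMul (clSpan (setMul (setMul M₂ D₂) N₂)) Z)
      (adjSet (clSpan (setMul (setMul M₁ D₁) N₁)))) ∧
    Z = clSpan (setMul (setMul (adjSet (clSpan (setMul (setMul M₂ D₂) N₂))) X)
      (clSpan (setMul (setMul M₁ D₁) N₁))) := by
  -- basic structure of `Y`
  have hYc : clSpan Y = Y := by rw [hY]; exact clSpan_clSpan _
  have hYclosed : IsClosed Y := by rw [hY]; exact isClosed_clSpan _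
  obtain ⟨pY, hpY⟩ : ∃ p : Submodule ℂ (H₁ →L[ℂ] H₂), Y = ↑p :=
    ⟨_, by rw [hY, clSpan_eq_coe]⟩
  have hY0 : (0 : H₁ →L[ℂ] H₂) ∈ Y := by rw [hpY]; exact pY.zero_mem
  have hYadd : ∀ u ∈ Y, ∀ v ∈ Y, u + v ∈ Y := by
    intro u hu v hv
    rw [hpY] at hu hv ⊢
    exact pY.add_mem hu hv
  have hYsmul : ∀ (c : ℂ), ∀ u ∈ Y, c • u ∈ Y := by
    intro c u hu
    rw [hpY] at hu ⊢
    exact pY.smul_mem c hu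
  -- the four one-sided absorption facts for the generators
  have hPM2Y : clSpan (setMul (setMul (adjSet M₂) M₂) Y) ⊆ Y := by
    calc clSpan (setMul (setMul (adjSet M₂) M₂) Y)
        = clSpan (setMul (setMul (adjSet M₂) M₂)
            (clSpan (setMul (setMul (adjSet M₂) X) M₁))) := by rw [hY]
      _ = clSpan (setMul (setMul (adjSet M₂) M₂) (setMul (setMul (adjSet M₂) X) M₁)) :=
          clSpan_setMul_right _ _
      _ = clSpan (setMul (setMul (setMul (setMul (adjSet M₂) M₂) (adjSet M₂)) X) M₁) := by
          congr 1; simp only [setMul_assoc]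
      _ ⊆ clSpan (setMul (setMul (adjSet M₂) X) M₁) :=
          clSpan_mono (setMul_mono (setMul_mono
            (by rw [setMul_assoc]; exact hM₂.setMul_sub') le_rfl) le_rfl)
      _ = Y := hY.symm
  have hPN2Y : clSpan (setMul (setMul N₂ (adjSet N₂)) Y) ⊆ Y := by
    calc clSpan (setMul (setMul N₂ (adjSet N₂)) Y)
        = clSpan (setMul (setMul N₂ (adjSet N₂))
            (clSpan (setMul (setMul N₂ Z) (adjSet N₁)))) := by rw [← hY']
      _ = clSpan (setMul (setMul N₂ (adjSet N₂)) (setMul (setMul N₂ Z) (adjSet N₁))) :=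
          clSpan_setMul_right _ _
      _ = clSpan (setMul (setMul (setMul (setMul N₂ (adjSet N₂)) N₂) Z) (adjSet N₁)) := by
          congr 1; simp only [setMul_assoc]
      _ ⊆ clSpan (setMul (setMul N₂ Z) (adjSet N₁)) :=
          clSpan_mono (setMul_mono (setMul_mono
            (by rw [setMul_assoc]; exact hN₂.setMul_sub) le_rfl) le_rfl)
      _ = Y := hY'.symm
  have hYQM1 : clSpan (setMul Y (setMul (adjSet M₁) M₁)) ⊆ Y := by
    calc clSpan (setMul Y (setMul (adjSet M₁) M₁))
        = clSpan (setMul (clSpan (setMul (setMul (adjSet M₂) X) M₁))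
            (setMul (adjSet M₁) M₁)) := by rw [hY]
      _ = clSpan (setMul (setMul (setMul (adjSet M₂) X) M₁) (setMul (adjSet M₁) M₁)) :=
          clSpan_setMul_left _ _
      _ = clSpan (setMul (setMul (adjSet M₂) X) (setMul M₁ (setMul (adjSet M₁) M₁))) := by
          congr 1; simp only [setMul_assoc]
      _ ⊆ clSpan (setMul (setMul (adjSet M₂) X) M₁) :=
          clSpan_mono (setMul_mono le_rfl hM₁.setMul_sub)
      _ = Y := hY.symm
  have hYQN1 : clSpan (setMul Y (setMul N₁ (adjSet N₁))) ⊆ Y := by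
    calc clSpan (setMul Y (setMul N₁ (adjSet N₁)))
        = clSpan (setMul (clSpan (setMul (setMul N₂ Z) (adjSet N₁)))
            (setMul N₁ (adjSet N₁))) := by rw [← hY']
      _ = clSpan (setMul (setMul (setMul N₂ Z) (adjSet N₁)) (setMul N₁ (adjSet N₁))) :=
          clSpan_setMul_left _ _
      _ = clSpan (setMul (setMul N₂ Z) (setMul (adjSet N₁) (setMul N₁ (adjSet N₁)))) := by
          congr 1; simp only [setMul_assoc]
      _ ⊆ clSpan (setMul (setMul N₂ Z) (adjSet N₁)) :=
          clSpan_mono (setMul_mono le_rfl hN₁.setMul_sub')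
      _ = Y := hY'.symm
  -- the two reverse absorption facts
  have hYsubQ' : Y = clSpan (setMul (setMul (adjSet M₂) M₂) (setMul Y (setMul (adjSet M₁) M₁))) := by
    calc Y = clSpan (setMul (setMul (adjSet M₂) X) M₁) := hY
      _ = clSpan (setMul (setMul (adjSet M₂)
            (clSpan (setMul (setMul M₂ Y) (adjSet M₁)))) M₁) := by rw [hX]
      _ = clSpan (setMul (setMul (adjSet M₂) (setMul (setMul M₂ Y) (adjSet M₁))) M₁) :=
          clSpan_setMul_congr_left _ (clSpan_setMul_right _ _)
      _ = clSpan (setMul (setMul (adjSet M₂) M₂) (setMul Y (setMul (adjSet M₁) M₁))) := by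
          congr 1; simp only [setMul_assoc]
  have hYsubP : Y ⊆ clSpan (setMul (setMul (adjSet M₂) M₂) Y) := by
    refine hYsubQ'.subset.trans ?_
    calc clSpan (setMul (setMul (adjSet M₂) M₂) (setMul Y (setMul (adjSet M₁) M₁)))
        = clSpan (setMul (setMul (adjSet M₂) M₂)
            (clSpan (setMul Y (setMul (adjSet M₁) M₁)))) := (clSpan_setMul_right _ _).symm
      _ ⊆ clSpan (setMul (setMul (adjSet M₂) M₂) Y) :=
          clSpan_mono (setMul_mono le_rfl hYQM1)
  have hYsubQ : Y ⊆ clSpan (setMul Y (setMul (adjSet M₁) M₁)) := by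
    refine hYsubQ'.subset.trans ?_
    calc clSpan (setMul (setMul (adjSet M₂) M₂) (setMul Y (setMul (adjSet M₁) M₁)))
        = clSpan (setMul (setMul (setMul (adjSet M₂) M₂) Y) (setMul (adjSet M₁) M₁)) := by
          congr 1; simp only [setMul_assoc]
      _ = clSpan (setMul (clSpan (setMul (setMul (adjSet M₂) M₂) Y))
            (setMul (adjSet M₁) M₁)) := (clSpan_setMul_left _ _).symm
      _ ⊆ clSpan (setMul Y (setMul (adjSet M₁) M₁)) :=
          clSpan_mono (setMul_mono hPM2Y le_rfl)
  -- generator facts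
  have hG2 : ∀ g ∈ (setMul (adjSet M₂) M₂ ∪ setMul N₂ (adjSet N₂)), ∀ y ∈ Y,
      g.comp y ∈ Y := by
    rintro g (hg | hg) y hy
    · exact hPM2Y (subset_clSpan _ ⟨g, hg, y, hy, rfl⟩)
    · exact hPN2Y (subset_clSpan _ ⟨g, hg, y, hy, rfl⟩)
  have hG2star : ∀ g ∈ (setMul (adjSet M₂) M₂ ∪ setMul N₂ (adjSet N₂)),
      star g ∈ (setMul (adjSet M₂) M₂ ∪ setMul N₂ (adjSet N₂)) := by
    rintro g (⟨-, ⟨a, ha, rfl⟩, b, hb, rfl⟩ | ⟨a, ha, -, ⟨b, hb, rfl⟩, rfl⟩)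
    · exact Or.inl ⟨ContinuousLinearMap.adjoint b, ⟨b, hb, rfl⟩, a, ha, by
        rw [ContinuousLinearMap.star_eq_adjoint, ContinuousLinearMap.adjoint_comp,
          ContinuousLinearMap.adjoint_adjoint]⟩
    · exact Or.inr ⟨b, hb, ContinuousLinearMap.adjoint a, ⟨a, ha, rfl⟩, by
        rw [ContinuousLinearMap.star_eq_adjoint, ContinuousLinearMap.adjoint_comp,
          ContinuousLinearMap.adjoint_adjoint]⟩
  have hG1 : ∀ g ∈ (setMul (adjSet M₁) M₁ ∪ setMul N₁ (adjSet N₁)), ∀ y ∈ Y,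
      y.comp g ∈ Y := by
    rintro g (hg | hg) y hy
    · exact hYQM1 (subset_clSpan _ ⟨y, hy, g, hg, rfl⟩)
    · exact hYQN1 (subset_clSpan _ ⟨y, hy, g, hg, rfl⟩)
  have hG1star : ∀ g ∈ (setMul (adjSet M₁) M₁ ∪ setMul N₁ (adjSet N₁)),
      star g ∈ (setMul (adjSet M₁) M₁ ∪ setMul N₁ (adjSet N₁)) := by
    rintro g (⟨-, ⟨a, ha, rfl⟩, b, hb, rfl⟩ | ⟨a, ha, -, ⟨b, hb, rfl⟩, rfl⟩)
    · exact Or.inl ⟨ContinuousLinearMap.adjoint b, ⟨b, hb, rfl⟩, a, ha, by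
        rw [ContinuousLinearMap.star_eq_adjoint, ContinuousLinearMap.adjoint_comp,
          ContinuousLinearMap.adjoint_adjoint]⟩
    · exact Or.inr ⟨b, hb, ContinuousLinearMap.adjoint a, ⟨a, ha, rfl⟩, by
        rw [ContinuousLinearMap.star_eq_adjoint, ContinuousLinearMap.adjoint_comp,
          ContinuousLinearMap.adjoint_adjoint]⟩
  -- absorption by the full C*-algebras
  have habs2 : ∀ d ∈ D₂, ∀ y ∈ Y, d.comp y ∈ Y := by
    rw [hD₂]
    exact absorb_left hYclosed hY0 hYadd hYsmul hG2 (fun g hg => hG2 _ (hG2star g hg))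
  have habs1 : ∀ d ∈ D₁, ∀ y ∈ Y, y.comp d ∈ Y := by
    rw [hD₁]
    exact absorb_right hYclosed hY0 hYadd hYsmul hG1 (fun g hg => hG1 _ (hG1star g hg))
  have hD2Y : clSpan (setMul D₂ Y) = Y := by
    refine Set.Subset.antisymm ?_ ?_
    · have h : setMul D₂ Y ⊆ Y := by
        rintro x ⟨d, hd, y, hy, rfl⟩
        exact habs2 d hd y hy
      calc clSpan (setMul D₂ Y) ⊆ clSpan Y := clSpan_mono h
        _ = Y := hYc
    · have hPM2D : setMul (adjSet M₂) M₂ ⊆ D₂ := by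
        rw [hD₂]
        intro x hx
        exact subset_closure (NonUnitalStarAlgebra.subset_adjoin ℂ _ (Or.inl hx))
      exact hYsubP.trans (clSpan_mono (setMul_mono hPM2D le_rfl))
  have hYD1 : clSpan (setMul Y D₁) = Y := by
    refine Set.Subset.antisymm ?_ ?_
    · have h : setMul Y D₁ ⊆ Y := by
        rintro x ⟨y, hy, d, hd, rfl⟩
        exact habs1 d hd y hy
      calc clSpan (setMul Y D₁) ⊆ clSpan Y := clSpan_mono h
        _ = Y := hYc
    · have hQM1D : setMul (adjSet M₁) M₁ ⊆ D₁ := by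
        rw [hD₁]
        intro x hx
        exact subset_closure (NonUnitalStarAlgebra.subset_adjoin ℂ _ (Or.inl hx))
      exact hYsubQ.trans (clSpan_mono (setMul_mono le_rfl hQM1D))
  -- the C*-algebras are selfadjoint
  have hD2star : adjSet D₂ = D₂ := by
    have hst : ∀ x ∈ D₂, star x ∈ D₂ := by
      intro x hx
      rw [hD₂] at hx ⊢
      exact map_mem_closure continuous_star hx (fun a ha => star_mem ha)
    rw [adjSet_eq_star_image]
    apply Set.Subset.antisymm
    · rintro x ⟨s, hs, rfl⟩
      exact hst s hs
    · intro x hx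
      exact ⟨star x, hst x hx, star_star x⟩
  have hD1star : adjSet D₁ = D₁ := by
    have hst : ∀ x ∈ D₁, star x ∈ D₁ := by
      intro x hx
      rw [hD₁] at hx ⊢
      exact map_mem_closure continuous_star hx (fun a ha => star_mem ha)
    rw [adjSet_eq_star_image]
    apply Set.Subset.antisymm
    · rintro x ⟨s, hs, rfl⟩
      exact hst s hs
    · intro x hx
      exact ⟨star x, hst x hx, star_star x⟩
  -- adjoints of the linking TROs
  have hadjL1 : adjSet (clSpan (setMul (setMul M₁ D₁) N₁))
      = clSpan (setMul (adjSet N₁) (setMul D₁ (adjSet M₁))) := by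
    rw [adjSet_clSpan, adjSet_setMul, adjSet_setMul, hD1star]
  have hadjL2 : adjSet (clSpan (setMul (setMul M₂ D₂) N₂))
      = clSpan (setMul (adjSet N₂) (setMul D₂ (adjSet M₂))) := by
    rw [adjSet_clSpan, adjSet_setMul, adjSet_setMul, hD2star]
  constructor
  · rw [hadjL1]
    refine Eq.symm ?_
    calc clSpan (setMul (setMul (clSpan (setMul (setMul M₂ D₂) N₂)) Z)
          (clSpan (setMul (adjSet N₁) (setMul D₁ (adjSet M₁)))))
        = clSpan (setMul (setMul (clSpan (setMul (setMul M₂ D₂) N₂)) Z)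
            (setMul (adjSet N₁) (setMul D₁ (adjSet M₁)))) := clSpan_setMul_right _ _
      _ = clSpan (setMul (setMul (setMul (setMul M₂ D₂) N₂) Z)
            (setMul (adjSet N₁) (setMul D₁ (adjSet M₁)))) :=
          clSpan_setMul_congr_left _ (clSpan_setMul_left _ _)
      _ = clSpan (setMul (setMul M₂ D₂)
            (setMul (setMul (setMul N₂ Z) (adjSet N₁)) (setMul D₁ (adjSet M₁)))) := by
          congr 1; simp only [setMul_assoc]
      _ = clSpan (setMul (setMul M₂ D₂)
            (setMul (clSpan (setMul (setMul N₂ Z) (adjSet N₁))) (setMul D₁ (adjSet M₁)))) :=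
          clSpan_setMul_middle _ _ _
      _ = clSpan (setMul (setMul M₂ D₂) (setMul Y (setMul D₁ (adjSet M₁)))) := by rw [← hY']
      _ = clSpan (setMul (setMul M₂ D₂) (setMul (setMul Y D₁) (adjSet M₁))) := by
          congr 1; simp only [setMul_assoc]
      _ = clSpan (setMul (setMul M₂ D₂) (setMul (clSpan (setMul Y D₁)) (adjSet M₁))) :=
          clSpan_setMul_middle _ _ _
      _ = clSpan (setMul (setMul M₂ D₂) (setMul Y (adjSet M₁))) := by rw [hYD1]
      _ = clSpan (setMul M₂ (setMul (setMul D₂ Y) (adjSet M₁))) := by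
          congr 1; simp only [setMul_assoc]
      _ = clSpan (setMul M₂ (setMul (clSpan (setMul D₂ Y)) (adjSet M₁))) :=
          clSpan_setMul_middle _ _ _
      _ = clSpan (setMul M₂ (setMul Y (adjSet M₁))) := by rw [hD2Y]
      _ = clSpan (setMul (setMul M₂ Y) (adjSet M₁)) := by
          congr 1; simp only [setMul_assoc]
      _ = X := hX.symm
  · rw [hadjL2]
    refine Eq.symm ?_
    calc clSpan (setMul (setMul (clSpan (setMul (adjSet N₂) (setMul D₂ (adjSet M₂)))) X)
          (clSpan (setMul (setMul M₁ D₁) N₁)))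
        = clSpan (setMul (setMul (clSpan (setMul (adjSet N₂) (setMul D₂ (adjSet M₂)))) X)
            (setMul (setMul M₁ D₁) N₁)) := clSpan_setMul_right _ _
      _ = clSpan (setMul (setMul (setMul (adjSet N₂) (setMul D₂ (adjSet M₂))) X)
            (setMul (setMul M₁ D₁) N₁)) :=
          clSpan_setMul_congr_left _ (clSpan_setMul_left _ _)
      _ = clSpan (setMul (setMul (adjSet N₂) D₂)
            (setMul (setMul (setMul (adjSet M₂) X) M₁) (setMul D₁ N₁))) := by
          congr 1; simp only [setMul_assoc]
      _ = clSpan (setMul (setMul (adjSet N₂) D₂)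
            (setMul (clSpan (setMul (setMul (adjSet M₂) X) M₁)) (setMul D₁ N₁))) :=
          clSpan_setMul_middle _ _ _
      _ = clSpan (setMul (setMul (adjSet N₂) D₂) (setMul Y (setMul D₁ N₁))) := by rw [← hY]
      _ = clSpan (setMul (adjSet N₂) (setMul (setMul D₂ Y) (setMul D₁ N₁))) := by
          congr 1; simp only [setMul_assoc]
      _ = clSpan (setMul (adjSet N₂) (setMul (clSpan (setMul D₂ Y)) (setMul D₁ N₁))) :=
          clSpan_setMul_middle _ _ _
      _ = clSpan (setMul (adjSet N₂) (setMul Y (setMul D₁ N₁))) := by rw [hD2Y]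
      _ = clSpan (setMul (adjSet N₂) (setMul (setMul Y D₁) N₁)) := by
          congr 1; simp only [setMul_assoc]
      _ = clSpan (setMul (adjSet N₂) (setMul (clSpan (setMul Y D₁)) N₁)) :=
          clSpan_setMul_middle _ _ _
      _ = clSpan (setMul (adjSet N₂) (setMul Y N₁)) := by rw [hYD1]
      _ = clSpan (setMul (setMul (adjSet N₂) Y) N₁) := by
          congr 1; simp only [setMul_assoc]
      _ = Z := hZ.symm

end
end

section
/- Let Y and Z be operator spaces with Y = cl span(M₂* Z) for a TRO M₂ containing a sequence (mᵢ) such that each Σ_{i=1}^k mᵢ mᵢ* is a contraction and Σ_{i=1}^k mᵢ mᵢ* z → z for all z ∈ Z. Then the map φ : Z → C_∞(Y), φ(z) = [mᵢ* z]ᵢ, is a complete isometry, the map ψ : C_∞(Y) → Z, ψ([yᵢ]) = Σᵢ mᵢ yᵢ, is a complete contraction onto Z, and ψ ∘ φ = id_Z; consequently C_∞(Y) ≅ φ(Z) ⊕ (range of the complementary projection) completely isometrically. -/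
noncomputable section
open ContinuousLinearMap Filter Topology

/-- The operator `H₁^n → H₂^n` (with the ℓ²-norms) associated to an `n × n` matrix of
operators. -/
def matOp {H₁ H₂ : Type*} [NormedAddCommGroup H₁] [InnerProductSpace ℂ H₁]
    [NormedAddCommGroup H₂] [InnerProductSpace ℂ H₂] {n : ℕ}
    (x : Matrix (Fin n) (Fin n) (H₁ →L[ℂ] H₂)) :
    (PiLp 2 fun _ : Fin n => H₁) →L[ℂ] (PiLp 2 fun _ : Fin n => H₂) :=
  (((PiLp.continuousLinearEquiv 2 ℂ fun _ : Fin n => H₂).symm :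
      (∀ _ : Fin n, H₂) →L[ℂ] PiLp 2 fun _ : Fin n => H₂).comp
    (ContinuousLinearMap.pi fun i => ∑ j, (x i j).comp (ContinuousLinearMap.proj j))).comp
    ((PiLp.continuousLinearEquiv 2 ℂ fun _ : Fin n => H₁ :
      (PiLp 2 fun _ : Fin n => H₁) →L[ℂ] ∀ _ : Fin n, H₁))

/-- A linear map between operator spaces is completely contractive on `X` if all its matrix
amplifications are contractive on matrices with entries from `X`. -/
def CompletelyContractiveOn {H₁ H₂ K₁ K₂ : Type*}
    [NormedAddCommGroup H₁] [InnerProductSpace ℂ H₁] [NormedAddCommGroup H₂]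
    [InnerProductSpace ℂ H₂] [NormedAddCommGroup K₁] [InnerProductSpace ℂ K₁]
    [NormedAddCommGroup K₂] [InnerProductSpace ℂ K₂]
    (f : (H₁ →L[ℂ] H₂) →ₗ[ℂ] (K₁ →L[ℂ] K₂)) (X : Set (H₁ →L[ℂ] H₂)) : Prop :=
  ∀ (n : ℕ) (x : Matrix (Fin n) (Fin n) (H₁ →L[ℂ] H₂)), (∀ i j, x i j ∈ X) →
    ‖matOp (Matrix.of fun i j => f (x i j))‖ ≤ ‖matOp x‖

/-- A linear map between operator spaces is completely isometric on `X` if all its matrix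
amplifications are isometric on matrices with entries from `X`. -/
def CompletelyIsometricOn {H₁ H₂ K₁ K₂ : Type*}
    [NormedAddCommGroup H₁] [InnerProductSpace ℂ H₁] [NormedAddCommGroup H₂]
    [InnerProductSpace ℂ H₂] [NormedAddCommGroup K₁] [InnerProductSpace ℂ K₁]
    [NormedAddCommGroup K₂] [InnerProductSpace ℂ K₂]
    (f : (H₁ →L[ℂ] H₂) →ₗ[ℂ] (K₁ →L[ℂ] K₂)) (X : Set (H₁ →L[ℂ] H₂)) : Prop :=
  ∀ (n : ℕ) (x : Matrix (Fin n) (Fin n) (H₁ →L[ℂ] H₂)), (∀ i j, x i j ∈ X) →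
    ‖matOp (Matrix.of fun i j => f (x i j))‖ = ‖matOp x‖

/-- Evaluation at a coordinate, as a continuous linear map on `ℓ²(ℕ, E)`. -/
def lpProj (E : Type*) [NormedAddCommGroup E] [NormedSpace ℂ E] (i : ℕ) :
    lp (fun _ : ℕ => E) 2 →L[ℂ] E :=
  LinearMap.mkContinuous
    { toFun := fun f => f i
      map_add' := fun f g => by simp
      map_smul' := fun c f => by simp }
    1 (fun f => by
      show ‖(f : ∀ _ : ℕ, E) i‖ ≤ 1 * ‖f‖
      simpa using lp.norm_apply_le_norm (by norm_num : (2 : ENNReal) ≠ 0) f i)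

/-- Inclusion of a coordinate, as a continuous linear map into `ℓ²(ℕ, E)`. -/
def lpSingle (E : Type*) [NormedAddCommGroup E] [NormedSpace ℂ E] (i : ℕ) :
    E →L[ℂ] lp (fun _ : ℕ => E) 2 :=
  LinearMap.mkContinuous
    { toFun := fun a => lp.single 2 i a
      map_add' := fun a b => by
        apply lp.ext; funext j
        by_cases h : j = i
        · subst h; simp [lp.single_apply_self]
        · simp [lp.single_apply_ne _ _ _ h]
      map_smul' := fun c a => by simp }
    1 (fun a => by
      rw [one_mul]
      exact (lp.norm_single (p := 2) (E := fun _ : ℕ => E) (by norm_num) i a).le)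

/-- The column space `C_∞(Y) ⊆ B(K₁, G^{(∞)})` over an operator space `Y ⊆ B(K₁, G)`:
operators all of whose components lie in `Y` and with `Σ yᵢ* yᵢ` norm convergent. -/
def ColInf {K₁ G : Type*} [NormedAddCommGroup K₁] [InnerProductSpace ℂ K₁] [CompleteSpace K₁]
    [NormedAddCommGroup G] [InnerProductSpace ℂ G] [CompleteSpace G]
    (Y : Set (K₁ →L[ℂ] G)) : Set (K₁ →L[ℂ] lp (fun _ : ℕ => G) 2) :=
  {T | (∀ i, (lpProj G i).comp T ∈ Y) ∧
    ∃ S : K₁ →L[ℂ] K₁, Tendsto (fun n => ∑ i ∈ Finset.range n,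
      (ContinuousLinearMap.adjoint ((lpProj G i).comp T)).comp ((lpProj G i).comp T))
      atTop (nhds S)}

set_option linter.unusedSectionVars false
set_option maxHeartbeats 1000000

section Aux

variable {K₁ K₂ G : Type*}
  [NormedAddCommGroup K₁] [InnerProductSpace ℂ K₁] [CompleteSpace K₁]
  [NormedAddCommGroup K₂] [InnerProductSpace ℂ K₂] [CompleteSpace K₂]
  [NormedAddCommGroup G] [InnerProductSpace ℂ G] [CompleteSpace G]

local notation "⟪" x ", " y "⟫" => @inner ℂ _ _ x y

lemma sumA (m : ℕ → (G →L[ℂ] K₂))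
    (hcontr : ∀ k, ‖∑ i ∈ Finset.range k, (m i).comp (ContinuousLinearMap.adjoint (m i))‖ ≤ 1)
    (v : K₂) (k : ℕ) :
    ∑ i ∈ Finset.range k, ‖ContinuousLinearMap.adjoint (m i) v‖ ^ 2 ≤ ‖v‖ ^ 2 := by
  have h1 : ∀ i, ‖ContinuousLinearMap.adjoint (m i) v‖ ^ 2
      = RCLike.re ⟪((m i).comp (ContinuousLinearMap.adjoint (m i))) v, v⟫ := by
    intro i
    rw [ContinuousLinearMap.comp_apply, ← ContinuousLinearMap.adjoint_inner_right,
      ← inner_self_eq_norm_sq (𝕜 := ℂ)]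
  simp only [h1]
  rw [← map_sum, ← sum_inner, ← ContinuousLinearMap.sum_apply]
  calc RCLike.re ⟪(∑ i ∈ Finset.range k, ((m i).comp (ContinuousLinearMap.adjoint (m i)))) v, v⟫
      ≤ ‖⟪(∑ i ∈ Finset.range k, ((m i).comp (ContinuousLinearMap.adjoint (m i)))) v, v⟫‖ :=
        RCLike.re_le_norm _
    _ ≤ ‖(∑ i ∈ Finset.range k, ((m i).comp (ContinuousLinearMap.adjoint (m i)))) v‖ * ‖v‖ :=
        norm_inner_le_norm _ _
    _ ≤ (‖∑ i ∈ Finset.range k, ((m i).comp (ContinuousLinearMap.adjoint (m i)))‖ * ‖v‖) * ‖v‖ := by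
        gcongr; exact le_opNorm _ _
    _ ≤ (1 * ‖v‖) * ‖v‖ := by gcongr; exact hcontr k
    _ = ‖v‖ ^ 2 := by ring

lemma sumA' (m : ℕ → (G →L[ℂ] K₂))
    (hcontr : ∀ k, ‖∑ i ∈ Finset.range k, (m i).comp (ContinuousLinearMap.adjoint (m i))‖ ≤ 1)
    (v : K₂) (F : Finset ℕ) :
    ∑ i ∈ F, ‖ContinuousLinearMap.adjoint (m i) v‖ ^ 2 ≤ ‖v‖ ^ 2 := by
  obtain ⟨N, hN⟩ : ∃ N, F ⊆ Finset.range N := by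
    rcases F.exists_nat_subset_range with ⟨N, hN⟩
    exact ⟨N, hN⟩
  calc ∑ i ∈ F, ‖ContinuousLinearMap.adjoint (m i) v‖ ^ 2
      ≤ ∑ i ∈ Finset.range N, ‖ContinuousLinearMap.adjoint (m i) v‖ ^ 2 :=
        Finset.sum_le_sum_of_subset_of_nonneg hN (fun i _ _ => by positivity)
    _ ≤ ‖v‖ ^ 2 := sumA m hcontr v N

lemma rowEst (m : ℕ → (G →L[ℂ] K₂))
    (hcontr : ∀ k, ‖∑ i ∈ Finset.range k, (m i).comp (ContinuousLinearMap.adjoint (m i))‖ ≤ 1)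
    (g : ℕ → G) (F : Finset ℕ) :
    ‖∑ i ∈ F, m i (g i)‖ ^ 2 ≤ ∑ i ∈ F, ‖g i‖ ^ 2 := by
  set v := ∑ i ∈ F, m i (g i) with hv
  have key : ‖v‖ ^ 2 ≤ Real.sqrt (∑ i ∈ F, ‖g i‖ ^ 2) * ‖v‖ := by
    have h1 : (‖v‖ : ℝ) ^ 2 = RCLike.re ⟪v, v⟫ := (inner_self_eq_norm_sq (𝕜 := ℂ) v).symm
    have h2 : ⟪v, v⟫ = ∑ i ∈ F, ⟪g i, ContinuousLinearMap.adjoint (m i) v⟫ := by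
      rw [hv, sum_inner]
      congr 1; funext i
      rw [ContinuousLinearMap.adjoint_inner_right]
    have h3 : RCLike.re ⟪v, v⟫ ≤ ∑ i ∈ F, ‖g i‖ * ‖ContinuousLinearMap.adjoint (m i) v‖ := by
      rw [h2, map_sum]
      apply Finset.sum_le_sum
      intro i _
      exact le_trans (RCLike.re_le_norm _) (norm_inner_le_norm _ _)
    have h4 : (∑ i ∈ F, ‖g i‖ * ‖ContinuousLinearMap.adjoint (m i) v‖) ^ 2
        ≤ (∑ i ∈ F, ‖g i‖ ^ 2) * ∑ i ∈ F, ‖ContinuousLinearMap.adjoint (m i) v‖ ^ 2 :=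
      Finset.sum_mul_sq_le_sq_mul_sq F _ _
    have h5 : (∑ i ∈ F, ‖g i‖ ^ 2) * ∑ i ∈ F, ‖ContinuousLinearMap.adjoint (m i) v‖ ^ 2
        ≤ (∑ i ∈ F, ‖g i‖ ^ 2) * ‖v‖ ^ 2 := by
      have := sumA' m hcontr v F
      have h0 : (0:ℝ) ≤ ∑ i ∈ F, ‖g i‖ ^ 2 := by positivity
      nlinarith
    have h6 : ∑ i ∈ F, ‖g i‖ * ‖ContinuousLinearMap.adjoint (m i) v‖
        ≤ Real.sqrt (∑ i ∈ F, ‖g i‖ ^ 2) * ‖v‖ := by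
      have hnn : 0 ≤ ∑ i ∈ F, ‖g i‖ * ‖ContinuousLinearMap.adjoint (m i) v‖ := by positivity
      nlinarith [Real.sq_sqrt (show (0:ℝ) ≤ ∑ i ∈ F, ‖g i‖ ^ 2 by positivity),
        Real.sqrt_nonneg (∑ i ∈ F, ‖g i‖ ^ 2), norm_nonneg v,
        mul_nonneg (Real.sqrt_nonneg (∑ i ∈ F, ‖g i‖ ^ 2)) (norm_nonneg v)]
    calc ‖v‖ ^ 2 = RCLike.re ⟪v, v⟫ := h1
      _ ≤ ∑ i ∈ F, ‖g i‖ * ‖ContinuousLinearMap.adjoint (m i) v‖ := h3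
      _ ≤ Real.sqrt (∑ i ∈ F, ‖g i‖ ^ 2) * ‖v‖ := h6
  have hvnn := norm_nonneg v
  nlinarith [Real.sq_sqrt (show (0:ℝ) ≤ ∑ i ∈ F, ‖g i‖ ^ 2 by positivity),
    Real.sqrt_nonneg (∑ i ∈ F, ‖g i‖ ^ 2)]

lemma colMem (m : ℕ → (G →L[ℂ] K₂))
    (hcontr : ∀ k, ‖∑ i ∈ Finset.range k, (m i).comp (ContinuousLinearMap.adjoint (m i))‖ ≤ 1)
    (η : K₂) : Memℓp (fun i => ContinuousLinearMap.adjoint (m i) η) 2 := by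
  apply memℓp_gen
  have : (2 : ENNReal).toReal = 2 := by norm_num
  rw [this]
  have hs : Summable fun i => ‖ContinuousLinearMap.adjoint (m i) η‖ ^ (2:ℕ) := by
    apply summable_of_sum_range_le (c := ‖η‖ ^ 2) (fun n => by positivity)
    intro n
    exact sumA' m hcontr η (Finset.range n)
  convert hs using 2 with i
  rw [Real.rpow_two]

/-- The column operator `η ↦ (mᵢ* η)`. -/
def col (m : ℕ → (G →L[ℂ] K₂))
    (hcontr : ∀ k, ‖∑ i ∈ Finset.range k, (m i).comp (ContinuousLinearMap.adjoint (m i))‖ ≤ 1) :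
    K₂ →L[ℂ] lp (fun _ : ℕ => G) 2 :=
  LinearMap.mkContinuous
    { toFun := fun η => ⟨fun i => ContinuousLinearMap.adjoint (m i) η, colMem m hcontr η⟩
      map_add' := fun a b => by
        apply lp.ext; funext i; simp [lp.coeFn_add]; rfl
      map_smul' := fun c a => by
        apply lp.ext; funext i; simp [lp.coeFn_smul] }
    1 (fun η => by
      rw [one_mul]
      apply lp.norm_le_of_forall_sum_le (by norm_num) (norm_nonneg η)
      intro s
      have : (2 : ENNReal).toReal = 2 := by norm_num
      rw [this]
      have := sumA' m hcontr η s
      calc ∑ i ∈ s, ‖(ContinuousLinearMap.adjoint (m i)) η‖ ^ (2:ℝ)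
          = ∑ i ∈ s, ‖(ContinuousLinearMap.adjoint (m i)) η‖ ^ (2:ℕ) := by
            apply Finset.sum_congr rfl; intro i _; rw [Real.rpow_two]
        _ ≤ ‖η‖ ^ (2:ℕ) := sumA' m hcontr η s
        _ = ‖η‖ ^ (2:ℝ) := by rw [Real.rpow_two])

lemma col_apply (m : ℕ → (G →L[ℂ] K₂)) (hcontr : ∀ k,
      ‖∑ i ∈ Finset.range k, (m i).comp (ContinuousLinearMap.adjoint (m i))‖ ≤ 1)
    (η : K₂) (i : ℕ) : (col m hcontr η : ∀ _ : ℕ, G) i = ContinuousLinearMap.adjoint (m i) η :=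
  rfl

lemma norm_col_le (m : ℕ → (G →L[ℂ] K₂)) (hcontr : ∀ k,
      ‖∑ i ∈ Finset.range k, (m i).comp (ContinuousLinearMap.adjoint (m i))‖ ≤ 1)
    (η : K₂) : ‖col m hcontr η‖ ≤ ‖η‖ := by
  apply lp.norm_le_of_forall_sum_le (by norm_num) (norm_nonneg η)
  intro s
  have h2 : (2 : ENNReal).toReal = 2 := by norm_num
  rw [h2]
  calc ∑ i ∈ s, ‖(col m hcontr η : ∀ _ : ℕ, G) i‖ ^ (2:ℝ)
      = ∑ i ∈ s, ‖(ContinuousLinearMap.adjoint (m i)) η‖ ^ (2:ℕ) := by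
        apply Finset.sum_congr rfl; intro i _; rw [col_apply, Real.rpow_two]
    _ ≤ ‖η‖ ^ (2:ℕ) := sumA' m hcontr η s
    _ = ‖η‖ ^ (2:ℝ) := by rw [Real.rpow_two]

lemma norm_sq_summable (f : lp (fun _ : ℕ => G) 2) :
    Summable (fun i => ‖(f : ∀ _ : ℕ, G) i‖ ^ (2:ℕ)) := by
  have : Summable (fun i => ‖(f : ∀ _ : ℕ, G) i‖ ^ ((2 : ENNReal).toReal)) :=
    ((lp.memℓp f).summable (by norm_num))
  convert this using 2 with i
  have h2 : (2 : ENNReal).toReal = 2 := by norm_num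
  rw [h2, Real.rpow_two]

lemma summable_row (m : ℕ → (G →L[ℂ] K₂))
    (hcontr : ∀ k, ‖∑ i ∈ Finset.range k, (m i).comp (ContinuousLinearMap.adjoint (m i))‖ ≤ 1)
    (f : lp (fun _ : ℕ => G) 2) :
    Summable (fun i => m i ((f : ∀ _ : ℕ, G) i)) := by
  rw [summable_iff_vanishing]
  intro e he
  rcases Metric.mem_nhds_iff.mp he with ⟨ε, hε, hball⟩
  have hsq : Summable (fun i => ‖(f : ∀ _ : ℕ, G) i‖ ^ (2:ℕ)) := norm_sq_summable f
  have := (summable_iff_vanishing.mp hsq) (Metric.ball 0 (ε^2/2))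
    (Metric.ball_mem_nhds 0 (by positivity))
  rcases this with ⟨s, hs⟩
  refine ⟨s, fun t ht => ?_⟩
  apply hball
  have h1 := hs t ht
  simp only [Metric.mem_ball, dist_zero_right, Real.norm_eq_abs] at h1 ⊢
  have h2 := rowEst m hcontr (fun i => (f : ∀ _ : ℕ, G) i) t
  have h3 : |∑ i ∈ t, ‖(f : ∀ _ : ℕ, G) i‖ ^ 2| = ∑ i ∈ t, ‖(f : ∀ _ : ℕ, G) i‖ ^ 2 := by
    apply abs_of_nonneg; positivity
  nlinarith [norm_nonneg (∑ i ∈ t, m i ((f : ∀ _ : ℕ, G) i)), abs_nonneg (∑ i ∈ t, ‖(f : ∀ _ : ℕ, G) i‖ ^ 2)]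

lemma hasSum_colst (m : ℕ → (G →L[ℂ] K₂))
    (hcontr : ∀ k, ‖∑ i ∈ Finset.range k, (m i).comp (ContinuousLinearMap.adjoint (m i))‖ ≤ 1)
    (f : lp (fun _ : ℕ => G) 2) :
    HasSum (fun i => m i ((f : ∀ _ : ℕ, G) i))
      (ContinuousLinearMap.adjoint (col m hcontr) f) := by
  obtain ⟨s, hs⟩ := (summable_row m hcontr f)
  convert hs using 1
  apply ext_inner_right ℂ
  intro η
  rw [ContinuousLinearMap.adjoint_inner_left]
  have h1 : ⟪f, col m hcontr η⟫ = ∑' i, ⟪(f : ∀ _ : ℕ, G) i, ContinuousLinearMap.adjoint (m i) η⟫ := by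
    rw [lp.inner_eq_tsum]
    rfl
  rw [h1]
  have h2 : HasSum (fun i => ⟪m i ((f : ∀ _ : ℕ, G) i), η⟫) ⟪s, η⟫ := by
    have : HasSum (fun i => ⟪η, m i ((f : ∀ _ : ℕ, G) i)⟫) ⟪η, s⟫ :=
      hs.mapL (innerSL ℂ η)
    have hc : HasSum (fun i => (starRingEnd ℂ) ⟪η, m i ((f : ∀ _ : ℕ, G) i)⟫)
        ((starRingEnd ℂ) ⟪η, s⟫) := this.mapL (RCLike.conjCLE (K := ℂ)).toContinuousLinearMap
    simpa only [inner_conj_symm] using hc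
  have h3 : (fun i => ⟪m i ((f : ∀ _ : ℕ, G) i), η⟫)
      = fun i => ⟪(f : ∀ _ : ℕ, G) i, ContinuousLinearMap.adjoint (m i) η⟫ := by
    funext i; rw [ContinuousLinearMap.adjoint_inner_right]
  rw [h3] at h2
  exact h2.tsum_eq

lemma norm_colst_le (m : ℕ → (G →L[ℂ] K₂)) (hcontr : ∀ k,
      ‖∑ i ∈ Finset.range k, (m i).comp (ContinuousLinearMap.adjoint (m i))‖ ≤ 1)
    (g : lp (fun _ : ℕ => G) 2) : ‖ContinuousLinearMap.adjoint (col m hcontr) g‖ ≤ ‖g‖ := by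
  have h1 : ‖ContinuousLinearMap.adjoint (col m hcontr)‖ ≤ 1 := by
    rw [adjoint.norm_map]
    exact (col m hcontr).opNorm_le_bound zero_le_one
      (fun η => by rw [one_mul]; exact norm_col_le m hcontr η)
  calc ‖ContinuousLinearMap.adjoint (col m hcontr) g‖
      ≤ ‖ContinuousLinearMap.adjoint (col m hcontr)‖ * ‖g‖ := le_opNorm _ _
    _ ≤ 1 * ‖g‖ := by gcongr
    _ = ‖g‖ := one_mul _

lemma colst_comp_eq (m : ℕ → (G →L[ℂ] K₂))
    (hcontr : ∀ k, ‖∑ i ∈ Finset.range k, (m i).comp (ContinuousLinearMap.adjoint (m i))‖ ≤ 1)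
    (z : K₁ →L[ℂ] K₂)
    (hz : Tendsto (fun k =>
      (∑ i ∈ Finset.range k, (m i).comp (ContinuousLinearMap.adjoint (m i))).comp z)
      atTop (nhds z)) :
    (ContinuousLinearMap.adjoint (col m hcontr)).comp ((col m hcontr).comp z) = z := by
  ext ξ
  have h1 : HasSum (fun i => m i (ContinuousLinearMap.adjoint (m i) (z ξ)))
      (ContinuousLinearMap.adjoint (col m hcontr) (col m hcontr (z ξ))) := by
    have := hasSum_colst m hcontr (col m hcontr (z ξ))
    simpa only [col_apply] using this
  have h2 : Tendsto (fun k => ∑ i ∈ Finset.range k, m i (ContinuousLinearMap.adjoint (m i) (z ξ)))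
      atTop (nhds (z ξ)) := by
    have hpt : Tendsto (fun k =>
        ((∑ i ∈ Finset.range k, (m i).comp (ContinuousLinearMap.adjoint (m i))).comp z) ξ)
        atTop (nhds (z ξ)) :=
      ((ContinuousLinearMap.apply ℂ K₂ ξ).continuous.tendsto z).comp hz
    convert hpt using 2 with k
    simp [ContinuousLinearMap.sum_apply]
  exact tendsto_nhds_unique h1.tendsto_sum_nat h2

/-- Truncation of an `ℓ²` element, zeroing out the first `k` coordinates. -/
def lpTail (k : ℕ) (f : lp (fun _ : ℕ => G) 2) : lp (fun _ : ℕ => G) 2 :=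
  ⟨fun i => if i < k then 0 else (f : ∀ _ : ℕ, G) i, by
    apply memℓp_gen
    have h2 : (2 : ENNReal).toReal = 2 := by norm_num
    rw [h2]
    have : Summable (fun i => ‖(f : ∀ _ : ℕ, G) i‖ ^ (2:ℕ)) := norm_sq_summable f
    apply Summable.of_nonneg_of_le (fun i => by positivity)
      (fun i => ?_) (this.congr (fun i => by rw [← Real.rpow_two]))
    by_cases h : i < k
    · simp [h, Real.rpow_two]
    · simp [h, Real.rpow_two]⟩

lemma lpTail_apply (k : ℕ) (f : lp (fun _ : ℕ => G) 2) (i : ℕ) :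
    (lpTail k f : ∀ _ : ℕ, G) i = if i < k then 0 else (f : ∀ _ : ℕ, G) i := rfl

lemma norm_lpTail_sq (k : ℕ) (f : lp (fun _ : ℕ => G) 2) :
    HasSum (fun i => ‖(lpTail k f : ∀ _ : ℕ, G) i‖ ^ (2:ℕ)) (‖lpTail k f‖ ^ (2:ℕ)) := by
  have := lp.hasSum_norm (p := 2) (by norm_num) (lpTail k f)
  have h2 : (2 : ENNReal).toReal = 2 := by norm_num
  rw [h2] at this
  convert this using 2 with i
  · rw [Real.rpow_two]
  · rw [Real.rpow_two]

lemma norm_f_sq (f : lp (fun _ : ℕ => G) 2) :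
    HasSum (fun i => ‖(f : ∀ _ : ℕ, G) i‖ ^ (2:ℕ)) (‖f‖ ^ (2:ℕ)) := by
  have := lp.hasSum_norm (p := 2) (by norm_num) f
  have h2 : (2 : ENNReal).toReal = 2 := by norm_num
  rw [h2] at this
  convert this using 2 with i
  · rw [Real.rpow_two]
  · rw [Real.rpow_two]

/-- The partial row sums applied to `f` differ from the full sum by `colst` of the tail. -/
lemma colst_sub_partial (m : ℕ → (G →L[ℂ] K₂))
    (hcontr : ∀ k, ‖∑ i ∈ Finset.range k, (m i).comp (ContinuousLinearMap.adjoint (m i))‖ ≤ 1)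
    (f : lp (fun _ : ℕ => G) 2) (k : ℕ) :
    ContinuousLinearMap.adjoint (col m hcontr) f - ∑ i ∈ Finset.range k, m i ((f : ∀ _ : ℕ, G) i)
      = ContinuousLinearMap.adjoint (col m hcontr) (lpTail k f) := by
  have h1 := hasSum_colst m hcontr f
  have h2 := hasSum_colst m hcontr (lpTail k f)
  have h3 : HasSum (fun i => m i ((f : ∀ _ : ℕ, G) i) - m i ((lpTail k f : ∀ _ : ℕ, G) i))
      (ContinuousLinearMap.adjoint (col m hcontr) f
        - ContinuousLinearMap.adjoint (col m hcontr) (lpTail k f)) := h1.sub h2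
  have h4 : (fun i => m i ((f : ∀ _ : ℕ, G) i) - m i ((lpTail k f : ∀ _ : ℕ, G) i))
      = fun i => if i < k then m i ((f : ∀ _ : ℕ, G) i) else 0 := by
    funext i
    rw [lpTail_apply]
    by_cases h : i < k
    · simp [h]
    · simp [h]
  rw [h4] at h3
  have h5 : HasSum (fun i => if i < k then m i ((f : ∀ _ : ℕ, G) i) else 0)
      (∑ i ∈ Finset.range k, m i ((f : ∀ _ : ℕ, G) i)) := by
    have h5a : HasSum (fun i => if i < k then m i ((f : ∀ _ : ℕ, G) i) else 0)
        (∑ i ∈ Finset.range k, if i < k then m i ((f : ∀ _ : ℕ, G) i) else 0) :=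
      hasSum_sum_of_ne_finset_zero
        (fun i hi => if_neg (by simpa [Finset.mem_range] using hi))
    have h5b : (∑ i ∈ Finset.range k, if i < k then m i ((f : ∀ _ : ℕ, G) i) else 0)
        = ∑ i ∈ Finset.range k, m i ((f : ∀ _ : ℕ, G) i) :=
      Finset.sum_congr rfl (fun i hi => if_pos (Finset.mem_range.mp hi))
    rwa [h5b] at h5a
  have h6 := h3.unique h5
  rw [← h6]
  abel

lemma partial_inner (T : K₁ →L[ℂ] lp (fun _ : ℕ => G) 2) (ξ : K₁) (k : ℕ) :
    ∑ i ∈ Finset.range k, ‖((T ξ : ∀ _ : ℕ, G)) i‖ ^ (2:ℕ)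
      = RCLike.re ⟪(∑ i ∈ Finset.range k,
          (ContinuousLinearMap.adjoint ((lpProj G i).comp T)).comp ((lpProj G i).comp T)) ξ, ξ⟫ := by
  rw [ContinuousLinearMap.sum_apply, sum_inner, map_sum]
  apply Finset.sum_congr rfl
  intro i _
  rw [ContinuousLinearMap.comp_apply, ContinuousLinearMap.adjoint_inner_left,
    ← inner_self_eq_norm_sq (𝕜 := ℂ)]
  rfl

lemma tendsto_row_comp (m : ℕ → (G →L[ℂ] K₂))
    (hcontr : ∀ k, ‖∑ i ∈ Finset.range k, (m i).comp (ContinuousLinearMap.adjoint (m i))‖ ≤ 1)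
    (T : K₁ →L[ℂ] lp (fun _ : ℕ => G) 2) (S : K₁ →L[ℂ] K₁)
    (hS : Tendsto (fun n => ∑ i ∈ Finset.range n,
      (ContinuousLinearMap.adjoint ((lpProj G i).comp T)).comp ((lpProj G i).comp T))
      atTop (nhds S)) :
    Tendsto (fun k => ∑ i ∈ Finset.range k, (m i).comp ((lpProj G i).comp T))
      atTop (nhds ((ContinuousLinearMap.adjoint (col m hcontr)).comp T)) := by
  set Sk : ℕ → K₁ →L[ℂ] K₁ := fun n => ∑ i ∈ Finset.range n,
    (ContinuousLinearMap.adjoint ((lpProj G i).comp T)).comp ((lpProj G i).comp T) with hSk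
  -- key norm estimate
  have key : ∀ k (ξ : K₁),
      ‖((ContinuousLinearMap.adjoint (col m hcontr)).comp T
        - ∑ i ∈ Finset.range k, (m i).comp ((lpProj G i).comp T)) ξ‖ ^ 2
      ≤ ‖S - Sk k‖ * ‖ξ‖ ^ 2 := by
    intro k ξ
    set f := T ξ with hf
    -- the difference applied to ξ equals colst of the tail
    have e1 : ((ContinuousLinearMap.adjoint (col m hcontr)).comp T
        - ∑ i ∈ Finset.range k, (m i).comp ((lpProj G i).comp T)) ξ
        = ContinuousLinearMap.adjoint (col m hcontr) (lpTail k f) := by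
      rw [← colst_sub_partial m hcontr f k]
      simp only [ContinuousLinearMap.sub_apply, ContinuousLinearMap.sum_apply,
        ContinuousLinearMap.comp_apply]
      rfl
    rw [e1]
    -- norm of tail squared
    have tot : HasSum (fun i => ‖(f : ∀ _ : ℕ, G) i‖ ^ (2:ℕ)) (‖f‖ ^ (2:ℕ)) := norm_f_sq f
    have part : HasSum (fun i => if i < k then ‖(f : ∀ _ : ℕ, G) i‖ ^ (2:ℕ) else 0)
        (∑ i ∈ Finset.range k, ‖(f : ∀ _ : ℕ, G) i‖ ^ (2:ℕ)) := by
      have h5a : HasSum (fun i => if i < k then ‖(f : ∀ _ : ℕ, G) i‖ ^ (2:ℕ) else 0)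
          (∑ i ∈ Finset.range k, if i < k then ‖(f : ∀ _ : ℕ, G) i‖ ^ (2:ℕ) else 0) :=
        hasSum_sum_of_ne_finset_zero (s := Finset.range k)
        (f := fun i => if i < k then ‖(f : ∀ _ : ℕ, G) i‖ ^ (2:ℕ) else 0)
        (fun i hi => if_neg (by simpa [Finset.mem_range] using hi))
      have h5b : (∑ i ∈ Finset.range k, if i < k then ‖(f : ∀ _ : ℕ, G) i‖ ^ (2:ℕ) else 0)
          = ∑ i ∈ Finset.range k, ‖(f : ∀ _ : ℕ, G) i‖ ^ (2:ℕ) :=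
        Finset.sum_congr rfl (fun i hi => if_pos (Finset.mem_range.mp hi))
      rwa [h5b] at h5a
    have hsub := tot.sub part
    have htail := norm_lpTail_sq k f
    have hfun : (fun i => ‖(f : ∀ _ : ℕ, G) i‖ ^ (2:ℕ)
          - if i < k then ‖(f : ∀ _ : ℕ, G) i‖ ^ (2:ℕ) else 0)
        = fun i => ‖(lpTail k f : ∀ _ : ℕ, G) i‖ ^ (2:ℕ) := by
      funext i
      rw [lpTail_apply]
      by_cases h : i < k
      · simp [h]
      · simp [h]
    rw [hfun] at hsub
    have e2 : ‖lpTail k f‖ ^ (2:ℕ)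
        = ‖f‖ ^ (2:ℕ) - ∑ i ∈ Finset.range k, ‖(f : ∀ _ : ℕ, G) i‖ ^ (2:ℕ) :=
      htail.unique hsub
    -- identify ‖f‖² as limit of partial inner products
    have hSpt : Tendsto (fun n => (Sk n) ξ) atTop (nhds (S ξ)) :=
      ((ContinuousLinearMap.apply ℂ K₁ ξ).continuous.tendsto S).comp hS
    have hinn : Tendsto (fun n => RCLike.re ⟪(Sk n) ξ, ξ⟫) atTop (nhds (RCLike.re ⟪S ξ, ξ⟫)) := by
      have hc : Continuous fun v : K₁ => RCLike.re ⟪v, ξ⟫ :=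
        RCLike.continuous_re.comp (continuous_id.inner continuous_const)
      exact (hc.tendsto _).comp hSpt
    have htot : ‖f‖ ^ (2:ℕ) = RCLike.re ⟪S ξ, ξ⟫ := by
      have t1 : Tendsto (fun n => ∑ i ∈ Finset.range n, ‖(f : ∀ _ : ℕ, G) i‖ ^ (2:ℕ))
          atTop (nhds (‖f‖ ^ (2:ℕ))) := tot.tendsto_sum_nat
      have t2 : (fun n => ∑ i ∈ Finset.range n, ‖(f : ∀ _ : ℕ, G) i‖ ^ (2:ℕ))
          = fun n => RCLike.re ⟪(Sk n) ξ, ξ⟫ := by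
        funext n; exact partial_inner T ξ n
      rw [t2] at t1
      exact tendsto_nhds_unique t1 hinn
    have e3 : ‖lpTail k f‖ ^ (2:ℕ) = RCLike.re ⟪(S - Sk k) ξ, ξ⟫ := by
      rw [e2, htot, partial_inner T ξ k, ContinuousLinearMap.sub_apply, inner_sub_left, map_sub]
    have e4 : ‖lpTail k f‖ ^ (2:ℕ) ≤ ‖S - Sk k‖ * ‖ξ‖ ^ 2 := by
      rw [e3]
      calc RCLike.re ⟪(S - Sk k) ξ, ξ⟫ ≤ ‖⟪(S - Sk k) ξ, ξ⟫‖ := RCLike.re_le_norm _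
        _ ≤ ‖(S - Sk k) ξ‖ * ‖ξ‖ := norm_inner_le_norm _ _
        _ ≤ (‖S - Sk k‖ * ‖ξ‖) * ‖ξ‖ := by gcongr; exact le_opNorm _ _
        _ = ‖S - Sk k‖ * ‖ξ‖ ^ 2 := by ring
    have e5 := norm_colst_le m hcontr (lpTail k f)
    nlinarith [norm_nonneg (ContinuousLinearMap.adjoint (col m hcontr) (lpTail k f)),
      norm_nonneg (lpTail k f)]
  -- conclude operator-norm convergence
  have hnorm : ∀ k, ‖(∑ i ∈ Finset.range k, (m i).comp ((lpProj G i).comp T))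
      - (ContinuousLinearMap.adjoint (col m hcontr)).comp T‖ ≤ Real.sqrt ‖S - Sk k‖ := by
    intro k
    rw [norm_sub_rev]
    refine ContinuousLinearMap.opNorm_le_bound _ (Real.sqrt_nonneg _) fun ξ => ?_
    have hk := key k ξ
    nlinarith [Real.sq_sqrt (norm_nonneg (S - Sk k)), Real.sqrt_nonneg ‖S - Sk k‖,
      norm_nonneg (((ContinuousLinearMap.adjoint (col m hcontr)).comp T
        - ∑ i ∈ Finset.range k, (m i).comp ((lpProj G i).comp T)) ξ), norm_nonneg ξ,
      mul_nonneg (Real.sqrt_nonneg ‖S - Sk k‖) (norm_nonneg ξ)]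
  have hz : Tendsto (fun k => Real.sqrt ‖S - Sk k‖) atTop (nhds 0) := by
    have h0 : Tendsto (fun k => ‖S - Sk k‖) atTop (nhds 0) := by
      have := (tendsto_iff_norm_sub_tendsto_zero).mp hS
      simpa [norm_sub_rev] using this
    have := (Real.continuous_sqrt.tendsto 0).comp h0
    simpa [Function.comp_def] using this
  rw [tendsto_iff_norm_sub_tendsto_zero]
  exact squeeze_zero (fun k => norm_nonneg _) hnorm hz

section MatOpAux
variable {H₁ H₂ H₃ : Type*} [NormedAddCommGroup H₁] [InnerProductSpace ℂ H₁]
  [NormedAddCommGroup H₂] [InnerProductSpace ℂ H₂]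
  [NormedAddCommGroup H₃] [InnerProductSpace ℂ H₃]
lemma matOp_apply {n : ℕ} (x : Matrix (Fin n) (Fin n) (H₁ →L[ℂ] H₂))
    (ξ : PiLp 2 fun _ : Fin n => H₁) (i : Fin n) :
    matOp x ξ i = ∑ j, x i j (ξ j) := by
  simp [matOp, ContinuousLinearMap.sum_apply]

lemma matOp_comp_left {n : ℕ} (A : H₂ →L[ℂ] H₃) (hA : ∀ η, ‖A η‖ ≤ ‖η‖)
    (x : Matrix (Fin n) (Fin n) (H₁ →L[ℂ] H₂)) :
    ‖matOp (Matrix.of fun i j => A.comp (x i j))‖ ≤ ‖matOp x‖ := by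
  refine ContinuousLinearMap.opNorm_le_bound (matOp (Matrix.of fun i j => A.comp (x i j)))
    (norm_nonneg (matOp x)) fun ξ => ?_
  have key : ∀ i, matOp (Matrix.of fun i j => A.comp (x i j)) ξ i = A (matOp x ξ i) := by
    intro i
    rw [matOp_apply, matOp_apply, map_sum]
    rfl
  have h1 : ‖matOp (Matrix.of fun i j => A.comp (x i j)) ξ‖ ≤ ‖matOp x ξ‖ := by
    have e1 := PiLp.norm_sq_eq_of_L2 _ (matOp (Matrix.of fun i j => A.comp (x i j)) ξ)
    have e2 := PiLp.norm_sq_eq_of_L2 _ (matOp x ξ)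
    have hle : ‖matOp (Matrix.of fun i j => A.comp (x i j)) ξ‖ ^ 2 ≤ ‖matOp x ξ‖ ^ 2 := by
      rw [e1, e2]
      apply Finset.sum_le_sum
      intro i _
      rw [key i]
      have := hA (matOp x ξ i)
      nlinarith [norm_nonneg (A (matOp x ξ i)), norm_nonneg (matOp x ξ i)]
    nlinarith [norm_nonneg (matOp (Matrix.of fun i j => A.comp (x i j)) ξ), norm_nonneg (matOp x ξ)]
  exact h1.trans (le_opNorm _ _)
end MatOpAux

end Aux

/-- If `Y = cl span(M* Z)` for a TRO `M` with a σ-unit sequence `(mᵢ)`,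
then `φ(z) = [mᵢ* z]` is a complete isometry of `Z` into `C_∞(Y)`, `ψ([yᵢ]) = Σ mᵢ yᵢ` is a
complete contraction of `C_∞(Y)` onto `Z` with `ψ ∘ φ = id_Z`, and `C_∞(Y)` decomposes as
`φ(Z)` plus an orthogonal complement via the idempotent `p = φ ∘ ψ`. -/
theorem column_space_absorption
    {K₁ K₂ G : Type*} [NormedAddCommGroup K₁] [InnerProductSpace ℂ K₁] [CompleteSpace K₁]
    [NormedAddCommGroup K₂] [InnerProductSpace ℂ K₂] [CompleteSpace K₂]
    [NormedAddCommGroup G] [InnerProductSpace ℂ G] [CompleteSpace G]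
    (Z : Set (K₁ →L[ℂ] K₂)) (hZ : IsOperatorSpace Z)
    (M : Set (G →L[ℂ] K₂)) (hM : IsTRO M)
    (Y : Set (K₁ →L[ℂ] G)) (hY : Y = clSpan (setMul (adjSet M) Z))
    (hMY : setMul M Y ⊆ Z)
    (m : ℕ → (G →L[ℂ] K₂)) (hm : ∀ i, m i ∈ M)
    (hcontr : ∀ k,
      ‖∑ i ∈ Finset.range k, (m i).comp (ContinuousLinearMap.adjoint (m i))‖ ≤ 1)
    (happrox : ∀ z ∈ Z, Tendsto (fun k =>
      (∑ i ∈ Finset.range k, (m i).comp (ContinuousLinearMap.adjoint (m i))).comp z)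
      atTop (nhds z)) :
    ∃ (φ : (K₁ →L[ℂ] K₂) →ₗ[ℂ] (K₁ →L[ℂ] lp (fun _ : ℕ => G) 2))
      (ψ : (K₁ →L[ℂ] lp (fun _ : ℕ => G) 2) →ₗ[ℂ] (K₁ →L[ℂ] K₂)),
      -- `φ(z) = [mᵢ* z]` maps `Z` into `C_∞(Y)` and is a complete isometry
      (∀ z ∈ Z, ∀ i, (lpProj G i).comp (φ z) = (ContinuousLinearMap.adjoint (m i)).comp z) ∧
      (∀ z ∈ Z, φ z ∈ ColInf Y) ∧
      CompletelyIsometricOn φ Z ∧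
      -- `ψ([yᵢ]) = Σ mᵢ yᵢ` is a complete contraction of `C_∞(Y)` onto `Z`
      (∀ T ∈ ColInf Y, Tendsto
        (fun k => ∑ i ∈ Finset.range k, (m i).comp ((lpProj G i).comp T))
        atTop (nhds (ψ T))) ∧
      CompletelyContractiveOn ψ (ColInf Y) ∧
      ψ '' ColInf Y = Z ∧
      -- `ψ ∘ φ = id_Z`
      (∀ z ∈ Z, ψ (φ z) = z) ∧
      -- orthogonal decomposition `C_∞(Y) = φ(Z) ⊕^⊥ ran(1 - p)` for `p = φ ∘ ψ`
      (∀ T ∈ ColInf Y, φ (ψ T) ∈ φ '' Z ∧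
        (ContinuousLinearMap.adjoint (φ (ψ T))).comp (T - φ (ψ T)) = 0) := by
  classical
  obtain ⟨hZclosed, p, hp⟩ := hZ
  set C : K₂ →L[ℂ] lp (fun _ : ℕ => G) 2 := col m hcontr with hC
  set Cst : lp (fun _ : ℕ => G) 2 →L[ℂ] K₂ := ContinuousLinearMap.adjoint (col m hcontr)
    with hCst
  refine ⟨{ toFun := fun z => C.comp z
            map_add' := fun a b => by ext ξ; simp
            map_smul' := fun c a => by ext ξ; simp },
          { toFun := fun T => Cst.comp T
            map_add' := fun a b => by ext ξ; simp
            map_smul' := fun c a => by ext ξ; simp }, ?_, ?_, ?_, ?_, ?_, ?_, ?_, ?_⟩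
  case _ => -- (1) components of φ
    intro z hz i
    ext ξ
    rfl
  case _ => -- (2) φ maps Z into ColInf Y
    intro z hz
    constructor
    · intro i
      show (lpProj G i).comp (C.comp z) ∈ Y
      have : (lpProj G i).comp (C.comp z) = (ContinuousLinearMap.adjoint (m i)).comp z := by
        ext ξ; rfl
      rw [this, hY]
      exact subset_closure (Submodule.subset_span
        ⟨ContinuousLinearMap.adjoint (m i), ⟨m i, hm i, rfl⟩, z, hz, rfl⟩)
    · refine ⟨(ContinuousLinearMap.adjoint z).comp z, ?_⟩
      have alg : ∀ k, (∑ i ∈ Finset.range k,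
          (ContinuousLinearMap.adjoint ((lpProj G i).comp (C.comp z))).comp
            ((lpProj G i).comp (C.comp z)))
          = (ContinuousLinearMap.adjoint z).comp
              ((∑ i ∈ Finset.range k,
                (m i).comp (ContinuousLinearMap.adjoint (m i))).comp z) := by
        intro k
        have hterm : ∀ i, (lpProj G i).comp (C.comp z)
            = (ContinuousLinearMap.adjoint (m i)).comp z := by
          intro i; ext ξ; rfl
        ext ξ
        simp only [ContinuousLinearMap.sum_apply, ContinuousLinearMap.comp_apply, map_sum]
        apply Finset.sum_congr rfl
        intro i _
        rw [hterm i, ContinuousLinearMap.adjoint_comp, ContinuousLinearMap.adjoint_adjoint]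
        rfl
      have hc : Tendsto (fun k => (ContinuousLinearMap.adjoint z).comp
          ((∑ i ∈ Finset.range k,
            (m i).comp (ContinuousLinearMap.adjoint (m i))).comp z))
          atTop (nhds ((ContinuousLinearMap.adjoint z).comp z)) := by
        have hcont : Continuous fun A : K₁ →L[ℂ] K₂ =>
            (ContinuousLinearMap.adjoint z).comp A :=
          (ContinuousLinearMap.compL ℂ K₁ K₂ K₁ (ContinuousLinearMap.adjoint z)).continuous
        exact (hcont.tendsto z).comp (happrox z hz)
      show Tendsto (fun n => ∑ i ∈ Finset.range n,
          (ContinuousLinearMap.adjoint ((lpProj G i).comp (C.comp z))).comp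
            ((lpProj G i).comp (C.comp z))) atTop
          (nhds ((ContinuousLinearMap.adjoint z).comp z))
      simp only [alg]
      exact hc
  case _ => -- (3) complete isometry
    intro n x hx
    apply le_antisymm
    · exact matOp_comp_left C (norm_col_le m hcontr) x
    · have hback : x = Matrix.of fun i j =>
          Cst.comp ((Matrix.of fun i j => C.comp (x i j)) i j) := by
        funext i j
        simp only [Matrix.of_apply]
        exact (colst_comp_eq m hcontr (x i j) (happrox _ (hx i j))).symm
      have hle := matOp_comp_left Cst (norm_colst_le m hcontr)
        (Matrix.of fun i j => C.comp (x i j))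
      rw [← hback] at hle
      exact hle
  case _ => -- (4) convergence to ψ T
    intro T hT
    obtain ⟨hTY, S, hS⟩ := hT
    exact tendsto_row_comp m hcontr T S hS
  case _ => -- (5) complete contraction
    intro n x hx
    exact matOp_comp_left Cst (norm_colst_le m hcontr) x
  case _ => -- (6) image is Z
    apply Set.Subset.antisymm
    · rintro _ ⟨T, hT, rfl⟩
      obtain ⟨hTY, S, hS⟩ := hT
      have hlim := tendsto_row_comp m hcontr T S hS
      have hmem : ∀ k, (∑ i ∈ Finset.range k, (m i).comp ((lpProj G i).comp T)) ∈ Z := by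
        intro k
        rw [hp]
        refine Submodule.sum_mem p (fun i _ => ?_)
        have hz2 : (m i).comp ((lpProj G i).comp T) ∈ Z :=
          hMY ⟨m i, hm i, _, hTY i, rfl⟩
        rw [hp] at hz2
        exact hz2
      exact hZclosed.mem_of_tendsto hlim (Eventually.of_forall hmem)
    · intro z hz
      refine ⟨C.comp z, ?_, colst_comp_eq m hcontr z (happrox z hz)⟩
      constructor
      · intro i
        have : (lpProj G i).comp (C.comp z) = (ContinuousLinearMap.adjoint (m i)).comp z := by
          ext ξ; rfl
        rw [this, hY]
        exact subset_closure (Submodule.subset_span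
          ⟨ContinuousLinearMap.adjoint (m i), ⟨m i, hm i, rfl⟩, z, hz, rfl⟩)
      · refine ⟨(ContinuousLinearMap.adjoint z).comp z, ?_⟩
        have alg : ∀ k, (∑ i ∈ Finset.range k,
            (ContinuousLinearMap.adjoint ((lpProj G i).comp (C.comp z))).comp
              ((lpProj G i).comp (C.comp z)))
            = (ContinuousLinearMap.adjoint z).comp
                ((∑ i ∈ Finset.range k,
                  (m i).comp (ContinuousLinearMap.adjoint (m i))).comp z) := by
          intro k
          have hterm : ∀ i, (lpProj G i).comp (C.comp z)
              = (ContinuousLinearMap.adjoint (m i)).comp z := by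
            intro i; ext ξ; rfl
          ext ξ
          simp only [ContinuousLinearMap.sum_apply, ContinuousLinearMap.comp_apply, map_sum]
          apply Finset.sum_congr rfl
          intro i _
          rw [hterm i, ContinuousLinearMap.adjoint_comp, ContinuousLinearMap.adjoint_adjoint]
          rfl
        have hc : Tendsto (fun k => (ContinuousLinearMap.adjoint z).comp
            ((∑ i ∈ Finset.range k,
              (m i).comp (ContinuousLinearMap.adjoint (m i))).comp z))
            atTop (nhds ((ContinuousLinearMap.adjoint z).comp z)) := by
          have hcont : Continuous fun A : K₁ →L[ℂ] K₂ =>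
              (ContinuousLinearMap.adjoint z).comp A :=
            (ContinuousLinearMap.compL ℂ K₁ K₂ K₁ (ContinuousLinearMap.adjoint z)).continuous
          exact (hcont.tendsto z).comp (happrox z hz)
        simp only [alg]
        exact hc
  case _ => -- (7) ψ ∘ φ = id on Z
    intro z hz
    exact colst_comp_eq m hcontr z (happrox z hz)
  case _ => -- (8) orthogonal decomposition
    intro T hT
    have hψZ : Cst.comp T ∈ Z := by
      obtain ⟨hTY, S, hS⟩ := hT
      have hlim := tendsto_row_comp m hcontr T S hS
      have hmem : ∀ k, (∑ i ∈ Finset.range k, (m i).comp ((lpProj G i).comp T)) ∈ Z := by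
        intro k
        rw [hp]
        refine Submodule.sum_mem p (fun i _ => ?_)
        have hz2 : (m i).comp ((lpProj G i).comp T) ∈ Z :=
          hMY ⟨m i, hm i, _, hTY i, rfl⟩
        rw [hp] at hz2
        exact hz2
      exact hZclosed.mem_of_tendsto hlim (Eventually.of_forall hmem)
    constructor
    · exact ⟨Cst.comp T, hψZ, rfl⟩
    · show (ContinuousLinearMap.adjoint (C.comp (Cst.comp T))).comp
        (T - C.comp (Cst.comp T)) = 0
      set w : K₁ →L[ℂ] K₂ := Cst.comp T with hw
      have hww : Cst.comp (C.comp w) = w := colst_comp_eq m hcontr w (happrox w hψZ)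
      have hkey : Cst.comp (T - C.comp w) = 0 := by
        rw [ContinuousLinearMap.comp_sub, hww]
        rw [← hw]
        abel
      rw [ContinuousLinearMap.adjoint_comp, ContinuousLinearMap.comp_assoc, hkey,
        ContinuousLinearMap.comp_zero]

end
end

section
/- There exist unital operator algebras X and Y inside M₂(ℂ) — namely X = span of the matrix unit E₁₂ and Y = span of E₂₂ — that are strongly TRO equivalent as operator spaces via M₁ = ℂ I₂ and M₂ = ℂ E₁₂, but are not strongly Δ-equivalent as operator algebras, since their diagonals X ∩ X* = 0 and Y ∩ Y* = Y are not Δ-equivalent. -/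
noncomputable section
open ContinuousLinearMap Filter Topology

/-- Strong TRO equivalence of concretely represented operator spaces:
`X = cl span(M₂ Y M₁*)` and `Y = cl span(M₂* X M₁)` for TROs `M₁`, `M₂`. -/
def StronglyTROEquiv {K₁ K₂ H₁ H₂ : Type*}
    [NormedAddCommGroup K₁] [InnerProductSpace ℂ K₁] [CompleteSpace K₁]
    [NormedAddCommGroup K₂] [InnerProductSpace ℂ K₂] [CompleteSpace K₂]
    [NormedAddCommGroup H₁] [InnerProductSpace ℂ H₁] [CompleteSpace H₁]
    [NormedAddCommGroup H₂] [InnerProductSpace ℂ H₂] [CompleteSpace H₂]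
    (X : Set (K₁ →L[ℂ] K₂)) (Y : Set (H₁ →L[ℂ] H₂)) : Prop :=
  ∃ (M₁ : Set (H₁ →L[ℂ] K₁)) (M₂ : Set (H₂ →L[ℂ] K₂)), IsTRO M₁ ∧ IsTRO M₂ ∧
    X = clSpan (setMul (setMul M₂ Y) (adjSet M₁)) ∧
    Y = clSpan (setMul (setMul (adjSet M₂) X) M₁)

universe u

/-- A bundled complex Hilbert space. -/
structure HilbertC : Type (u + 1) where
  carrier : Type u
  [ng : NormedAddCommGroup carrier]
  [ip : InnerProductSpace ℂ carrier]
  [cs : CompleteSpace carrier]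

attribute [instance] HilbertC.ng HilbertC.ip HilbertC.cs
instance : CoeSort HilbertC (Type u) := ⟨HilbertC.carrier⟩

/-- Strong Δ-equivalence of operator algebras: completely isometric homomorphisms `φ`, `ψ`
and a single TRO `M` with `φ(X) = cl span(M ψ(Y) M*)` and `ψ(Y) = cl span(M* φ(X) M)`. -/
def StronglyDeltaEquivAlg {K L : Type u}
    [NormedAddCommGroup K] [InnerProductSpace ℂ K] [CompleteSpace K]
    [NormedAddCommGroup L] [InnerProductSpace ℂ L] [CompleteSpace L]
    (X : Set (K →L[ℂ] K)) (Y : Set (L →L[ℂ] L)) : Prop :=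
  ∃ (G₁ G₂ : HilbertC.{u})
    (φ : (K →L[ℂ] K) →ₗ[ℂ] (G₁ →L[ℂ] G₁)) (ψ : (L →L[ℂ] L) →ₗ[ℂ] (G₂ →L[ℂ] G₂))
    (M : Set (G₂ →L[ℂ] G₁)),
    CompletelyIsometricOn φ X ∧ CompletelyIsometricOn ψ Y ∧
    (∀ x ∈ X, ∀ x' ∈ X, φ (x.comp x') = (φ x).comp (φ x')) ∧
    (∀ y ∈ Y, ∀ y' ∈ Y, ψ (y.comp y') = (ψ y).comp (ψ y')) ∧
    IsTRO M ∧
    φ '' X = clSpan (setMul (setMul M (ψ '' Y)) (adjSet M)) ∧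
    ψ '' Y = clSpan (setMul (setMul (adjSet M) (φ '' X)) M)

/-- The matrix unit `E₁₂` as an operator on `ℂ²`. -/
def egE12 : EuclideanSpace ℂ (Fin 2) →L[ℂ] EuclideanSpace ℂ (Fin 2) :=
  Matrix.toEuclideanCLM (𝕜 := ℂ) (Matrix.single 0 1 1)

/-- The matrix unit `E₂₂` as an operator on `ℂ²`. -/
def egE22 : EuclideanSpace ℂ (Fin 2) →L[ℂ] EuclideanSpace ℂ (Fin 2) :=
  Matrix.toEuclideanCLM (𝕜 := ℂ) (Matrix.single 1 1 1)

/-- The operator algebra `X = ℂ E₁₂ ⊆ M₂(ℂ)`. -/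
def egX : Set (EuclideanSpace ℂ (Fin 2) →L[ℂ] EuclideanSpace ℂ (Fin 2)) :=
  {T | ∃ c : ℂ, T = c • egE12}

/-- The operator algebra `Y = ℂ E₂₂ ⊆ M₂(ℂ)`. -/
def egY : Set (EuclideanSpace ℂ (Fin 2) →L[ℂ] EuclideanSpace ℂ (Fin 2)) :=
  {T | ∃ c : ℂ, T = c • egE22}

/-- The TRO `M₁ = ℂ I₂`. -/
def egM1 : Set (EuclideanSpace ℂ (Fin 2) →L[ℂ] EuclideanSpace ℂ (Fin 2)) :=
  {T | ∃ c : ℂ, T = c • (1 : EuclideanSpace ℂ (Fin 2) →L[ℂ] EuclideanSpace ℂ (Fin 2))}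

/-- The TRO `M₂ = ℂ E₁₂`. -/
def egM2 : Set (EuclideanSpace ℂ (Fin 2) →L[ℂ] EuclideanSpace ℂ (Fin 2)) :=
  {T | ∃ c : ℂ, T = c • egE12}


/-! ### Auxiliary lemmas -/

section AuxGeneric

variable {H₁ H₂ : Type*} [NormedAddCommGroup H₁] [InnerProductSpace ℂ H₁]
    [NormedAddCommGroup H₂] [InnerProductSpace ℂ H₂]

omit [InnerProductSpace ℂ H₁] in
lemma pilp_one_norm (w : PiLp 2 fun _ : Fin 1 => H₂) : ‖w‖ = ‖w 0‖ := by
  rw [PiLp.norm_eq_sum (by norm_num)]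
  simp [Fin.sum_univ_one]
  rw [← Real.rpow_natCast (‖w 0‖) 2, ← Real.rpow_mul (norm_nonneg _)]
  norm_num

lemma matOp_apply_one (x : Matrix (Fin 1) (Fin 1) (H₁ →L[ℂ] H₂)) (v : PiLp 2 fun _ : Fin 1 => H₁)
    (i : Fin 1) : matOp x v i = x 0 0 (v 0) := by
  have : i = 0 := Subsingleton.elim i 0
  subst this
  simp [matOp, ContinuousLinearMap.sum_apply, Fin.sum_univ_one]

lemma matOp_one_norm (x : Matrix (Fin 1) (Fin 1) (H₁ →L[ℂ] H₂)) : ‖matOp x‖ = ‖x 0 0‖ := by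
  apply le_antisymm
  · refine ContinuousLinearMap.opNorm_le_bound _ (norm_nonneg _) (fun v => ?_)
    rw [pilp_one_norm (matOp x v), matOp_apply_one, pilp_one_norm v]
    exact (x 0 0).le_opNorm _
  · refine ContinuousLinearMap.opNorm_le_bound _ (norm_nonneg (matOp x)) (fun u => ?_)
    set v : PiLp 2 fun _ : Fin 1 => H₁ := (WithLp.equiv 2 _).symm (fun _ => u)
    have hv : v 0 = u := rfl
    calc ‖x 0 0 u‖ = ‖matOp x v 0‖ := by rw [matOp_apply_one, hv]
    _ = ‖matOp x v‖ := (pilp_one_norm _).symm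
    _ ≤ ‖matOp x‖ * ‖v‖ := (matOp x).le_opNorm v
    _ = ‖matOp x‖ * ‖u‖ := by rw [pilp_one_norm v, hv]

end AuxGeneric

section AuxHilbert

variable {G : Type*} [NormedAddCommGroup G] [InnerProductSpace ℂ G] [CompleteSpace G]

local notation "⟪" x ", " y "⟫" => @inner ℂ _ _ x y

omit [CompleteSpace G] in
lemma ortho_of_fixed_of_ker (b : G →L[ℂ] G) (hn : ‖b‖ ≤ 1)
    (ζ η : G) (hζ : b ζ = ζ) (hη : b η = 0) : ⟪ζ, η⟫ = 0 := by
  by_contra hc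
  set c : ℂ := ⟪ζ, η⟫ with hcdef
  set s : ℝ := 1 / (‖η‖ ^ 2 + 1) with hsdef
  have hspos : 0 < s := by positivity
  set t : ℂ := -(s : ℂ) * (starRingEnd ℂ) c with htdef
  have key : ‖ζ‖ ≤ ‖ζ + t • η‖ := by
    have h1 : b (ζ + t • η) = ζ := by
      rw [map_add, hζ, map_smul, hη, smul_zero, add_zero]
    calc ‖ζ‖ = ‖b (ζ + t • η)‖ := by rw [h1]
    _ ≤ ‖b‖ * ‖ζ + t • η‖ := b.le_opNorm _
    _ ≤ 1 * ‖ζ + t • η‖ := by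
        apply mul_le_mul_of_nonneg_right hn (norm_nonneg _)
    _ = ‖ζ + t • η‖ := one_mul _
  have key2 : ‖ζ‖ ^ 2 ≤ ‖ζ + t • η‖ ^ 2 := by
    apply pow_le_pow_left₀ (norm_nonneg _) key
  rw [@norm_add_sq ℂ] at key2
  have hinner : ⟪ζ, t • η⟫ = -(s : ℂ) * ((starRingEnd ℂ) c * c) := by
    rw [inner_smul_right, htdef, ← hcdef]; ring
  have hre : RCLike.re ⟪ζ, t • η⟫ = -s * Complex.normSq c := by
    rw [RCLike.re_to_complex, hinner, ← Complex.normSq_eq_conj_mul_self]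
    simp
  have hnt : ‖t • η‖ ^ 2 = s ^ 2 * Complex.normSq c * ‖η‖ ^ 2 := by
    rw [norm_smul, mul_pow]
    congr 1
    rw [htdef, norm_mul, norm_neg, Complex.norm_real, RCLike.norm_conj, mul_pow,
      Real.norm_eq_abs, sq_abs, Complex.sq_norm]
  rw [hre, hnt] at key2
  have hns : 0 < Complex.normSq c := by rwa [Complex.normSq_pos]
  have hlt : s * ‖η‖ ^ 2 < 2 := by
    rw [hsdef, div_mul_eq_mul_div, one_mul, div_lt_iff₀ (by positivity)]
    nlinarith [sq_nonneg ‖η‖]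
  have hprod : 0 < s * Complex.normSq c * (2 - s * ‖η‖ ^ 2) :=
    mul_pos (mul_pos hspos hns) (by linarith)
  nlinarith [hprod]

lemma adjoint_eq_self_of_idem (b : G →L[ℂ] G) (hb : b.comp b = b) (hn : ‖b‖ ≤ 1) :
    ContinuousLinearMap.adjoint b = b := by
  symm
  rw [ContinuousLinearMap.eq_adjoint_iff]
  intro x y
  have hbb : ∀ z, b (b z) = b z := fun z => by
    simpa using ContinuousLinearMap.ext_iff.mp hb z
  have h1 : ⟪b x, y - b y⟫ = 0 :=
    ortho_of_fixed_of_ker b hn _ _ (hbb x) (by rw [map_sub, hbb, sub_self])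
  have h2 : ⟪b y, x - b x⟫ = 0 :=
    ortho_of_fixed_of_ker b hn _ _ (hbb y) (by rw [map_sub, hbb, sub_self])
  have h2' : ⟪x - b x, b y⟫ = 0 := by
    rw [← inner_conj_symm, h2, map_zero]
  calc ⟪b x, y⟫ = ⟪b x, b y⟫ + ⟪b x, y - b y⟫ := by rw [← inner_add_right]; congr 1; abel
  _ = ⟪b x, b y⟫ := by rw [h1, add_zero]
  _ = ⟪x - b x, b y⟫ + ⟪b x, b y⟫ := by rw [h2', zero_add]
  _ = ⟪x, b y⟫ := by rw [← inner_add_left]; congr 1; abel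

end AuxHilbert

section AuxClSpan

lemma smul_set_eq_span {E : Type*} [NormedAddCommGroup E] [NormedSpace ℂ E] (v : E) :
    {x : E | ∃ c : ℂ, x = c • v} = ↑(Submodule.span ℂ {v}) := by
  ext x
  simp only [Set.mem_setOf_eq, SetLike.mem_coe, Submodule.mem_span_singleton]
  constructor
  · rintro ⟨c, rfl⟩; exact ⟨c, rfl⟩
  · rintro ⟨c, rfl⟩; exact ⟨c, rfl⟩

lemma isClosed_smul_set {E : Type*} [NormedAddCommGroup E] [NormedSpace ℂ E] (v : E) :
    IsClosed {x : E | ∃ c : ℂ, x = c • v} := by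
  rw [smul_set_eq_span]
  exact Submodule.closed_of_finiteDimensional _

lemma clSpan_smul_set {E : Type*} [NormedAddCommGroup E] [NormedSpace ℂ E] (v : E) :
    clSpan {x : E | ∃ c : ℂ, x = c • v} = {x : E | ∃ c : ℂ, x = c • v} := by
  rw [clSpan, smul_set_eq_span, Submodule.span_coe_eq_restrictScalars,
    Submodule.restrictScalars_self]
  exact IsClosed.closure_eq (Submodule.closed_of_finiteDimensional _)

lemma adjoint_mem_clSpan {H K : Type*} [NormedAddCommGroup H] [InnerProductSpace ℂ H]
    [CompleteSpace H] [NormedAddCommGroup K] [InnerProductSpace ℂ K] [CompleteSpace K]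
    (S : Set (H →L[ℂ] K)) (hS : ∀ t ∈ S, ContinuousLinearMap.adjoint t ∈ adjSet S → True) :
    True := trivial

end AuxClSpan

section AuxMatrixUnits

/-- The matrix unit `E₂₁`. -/
def egE21 : EuclideanSpace ℂ (Fin 2) →L[ℂ] EuclideanSpace ℂ (Fin 2) :=
  Matrix.toEuclideanCLM (𝕜 := ℂ) (Matrix.single 1 0 1)

lemma e12_comp_e12 : egE12.comp egE12 = 0 := by
  rw [← ContinuousLinearMap.mul_def, egE12, ← map_mul]
  rw [Matrix.single_mul_single_of_ne (c := (1 : ℂ)) (0 : Fin 2) (1 : Fin 2) (0 : Fin 2) (by decide) (1 : ℂ)]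
  simp

lemma e12_comp_e22 : egE12.comp egE22 = egE12 := by
  rw [← ContinuousLinearMap.mul_def, egE12, egE22, ← map_mul, Matrix.single_mul_single_same]
  norm_num

lemma e22_comp_e22 : egE22.comp egE22 = egE22 := by
  rw [← ContinuousLinearMap.mul_def, egE22, ← map_mul, Matrix.single_mul_single_same]
  norm_num

lemma adj_e12 : ContinuousLinearMap.adjoint egE12 = egE21 := by
  rw [← ContinuousLinearMap.star_eq_adjoint, egE12, egE21, ← map_star]
  congr 1
  ext i j
  simp [Matrix.star_eq_conjTranspose, Matrix.conjTranspose_apply, Matrix.single]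
  aesop

lemma adj_e22 : ContinuousLinearMap.adjoint egE22 = egE22 := by
  rw [← ContinuousLinearMap.star_eq_adjoint, egE22, ← map_star]
  congr 1
  ext i j
  simp [Matrix.star_eq_conjTranspose, Matrix.conjTranspose_apply, Matrix.single]
  aesop

lemma e21_comp_e12 : egE21.comp egE12 = egE22 := by
  rw [← ContinuousLinearMap.mul_def, egE21, egE12, egE22, ← map_mul,
    Matrix.single_mul_single_same]
  norm_num

lemma e12_ne_zero : egE12 ≠ 0 := by
  rw [egE12]
  intro h
  rw [← map_zero (Matrix.toEuclideanCLM (n := Fin 2) (𝕜 := ℂ))] at h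
  have h2 := (Matrix.toEuclideanCLM (n := Fin 2) (𝕜 := ℂ)).injective h
  have := congrFun (congrFun h2 0) 1
  simp [Matrix.single] at this

lemma e22_apply' (v : EuclideanSpace ℂ (Fin 2)) :
    WithLp.ofLp (egE22 v) = fun i : Fin 2 => if i = 1 then v 1 else 0 := by
  funext i
  have : WithLp.ofLp (egE22 v) i = (Matrix.single (1 : Fin 2) 1 (1 : ℂ)).mulVec (WithLp.ofLp v) i := rfl
  rw [this, Matrix.mulVec]
  simp [Matrix.single, dotProduct]
  fin_cases i <;> simp

lemma norm_e22_le : ‖egE22‖ ≤ 1 := by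
  refine ContinuousLinearMap.opNorm_le_bound _ zero_le_one (fun v => ?_)
  rw [one_mul, EuclideanSpace.norm_eq, EuclideanSpace.norm_eq]
  apply Real.sqrt_le_sqrt
  rw [Fin.sum_univ_two, Fin.sum_univ_two]
  have h0 : egE22 v 0 = 0 := by rw [e22_apply']; simp
  have h1 : egE22 v 1 = v 1 := by rw [e22_apply']; simp
  rw [h0, h1]
  simp [sq_nonneg]

end AuxMatrixUnits

section AuxSets

lemma adj_one {H : Type*} [NormedAddCommGroup H] [InnerProductSpace ℂ H] [CompleteSpace H] :
    ContinuousLinearMap.adjoint (1 : H →L[ℂ] H) = 1 := by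
  rw [← ContinuousLinearMap.star_eq_adjoint, star_one]

lemma one_comp' {H K : Type*} [NormedAddCommGroup H] [NormedSpace ℂ H]
    [NormedAddCommGroup K] [NormedSpace ℂ K] (f : H →L[ℂ] K) :
    (1 : K →L[ℂ] K).comp f = f := by
  rw [ContinuousLinearMap.one_def, ContinuousLinearMap.id_comp]

lemma comp_one' {H K : Type*} [NormedAddCommGroup H] [NormedSpace ℂ H]
    [NormedAddCommGroup K] [NormedSpace ℂ K] (f : H →L[ℂ] K) :
    f.comp (1 : H →L[ℂ] H) = f := by
  rw [ContinuousLinearMap.one_def, ContinuousLinearMap.comp_id]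

lemma adjSet_egM1 : adjSet egM1 = egM1 := by
  ext x
  constructor
  · rintro ⟨s, ⟨c, rfl⟩, rfl⟩
    exact ⟨starRingEnd ℂ c, by
      rw [LinearIsometryEquiv.map_smulₛₗ ContinuousLinearMap.adjoint,
        adj_one]⟩
  · rintro ⟨c, rfl⟩
    refine ⟨(starRingEnd ℂ c) • 1, ⟨starRingEnd ℂ c, rfl⟩, ?_⟩
    rw [LinearIsometryEquiv.map_smulₛₗ ContinuousLinearMap.adjoint,
      adj_one, RingHomCompTriple.comp_apply]
    simp

lemma adjSet_egM2 : adjSet egM2 = {x | ∃ c : ℂ, x = c • egE21} := by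
  ext x
  constructor
  · rintro ⟨s, ⟨c, rfl⟩, rfl⟩
    exact ⟨starRingEnd ℂ c, by
      rw [LinearIsometryEquiv.map_smulₛₗ ContinuousLinearMap.adjoint, adj_e12]⟩
  · rintro ⟨c, rfl⟩
    refine ⟨(starRingEnd ℂ c) • egE12, ⟨starRingEnd ℂ c, rfl⟩, ?_⟩
    rw [LinearIsometryEquiv.map_smulₛₗ ContinuousLinearMap.adjoint, adj_e12]
    simp

lemma setMul_egM2_egY : setMul egM2 egY = egX := by
  ext x
  constructor
  · rintro ⟨s, ⟨c, rfl⟩, t, ⟨d, rfl⟩, rfl⟩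
    exact ⟨c * d, by
      rw [ContinuousLinearMap.smul_comp, ContinuousLinearMap.comp_smul, e12_comp_e22,
        smul_smul]⟩
  · rintro ⟨c, rfl⟩
    refine ⟨c • egE12, ⟨c, rfl⟩, (1 : ℂ) • egE22, ⟨1, rfl⟩, ?_⟩
    rw [one_smul, ContinuousLinearMap.smul_comp, e12_comp_e22]

lemma setMul_egX_egM1 : setMul egX egM1 = egX := by
  ext x
  constructor
  · rintro ⟨s, ⟨c, rfl⟩, t, ⟨d, rfl⟩, rfl⟩
    exact ⟨c * d, by
      rw [ContinuousLinearMap.smul_comp, ContinuousLinearMap.comp_smul,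
        comp_one' , smul_smul]⟩
  · rintro ⟨c, rfl⟩
    refine ⟨c • egE12, ⟨c, rfl⟩, (1 : ℂ) • 1, ⟨1, rfl⟩, ?_⟩
    rw [one_smul, comp_one']

lemma setMul_adj_egM2_egX : setMul (adjSet egM2) egX = egY := by
  rw [adjSet_egM2]
  ext x
  constructor
  · rintro ⟨s, ⟨c, rfl⟩, t, ⟨d, rfl⟩, rfl⟩
    exact ⟨c * d, by
      rw [ContinuousLinearMap.smul_comp, ContinuousLinearMap.comp_smul, e21_comp_e12,
        smul_smul]⟩
  · rintro ⟨c, rfl⟩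
    refine ⟨c • egE21, ⟨c, rfl⟩, (1 : ℂ) • egE12, ⟨1, rfl⟩, ?_⟩
    rw [one_smul, ContinuousLinearMap.smul_comp, e21_comp_e12]

lemma setMul_egY_egM1 : setMul egY egM1 = egY := by
  ext x
  constructor
  · rintro ⟨s, ⟨c, rfl⟩, t, ⟨d, rfl⟩, rfl⟩
    exact ⟨c * d, by
      rw [ContinuousLinearMap.smul_comp, ContinuousLinearMap.comp_smul,
        comp_one' , smul_smul]⟩
  · rintro ⟨c, rfl⟩
    refine ⟨c • egE22, ⟨c, rfl⟩, (1 : ℂ) • 1, ⟨1, rfl⟩, ?_⟩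
    rw [one_smul, comp_one']

lemma isTRO_egM1 : IsTRO egM1 := by
  constructor
  · exact isClosed_smul_set _
  · exact ⟨0, (zero_smul ℂ (1 : EuclideanSpace ℂ (Fin 2) →L[ℂ] EuclideanSpace ℂ (Fin 2))).symm⟩
  · rintro x ⟨c, rfl⟩ y ⟨d, rfl⟩; exact ⟨c + d, (add_smul c d _).symm⟩
  · rintro c x ⟨d, rfl⟩; exact ⟨c * d, smul_smul c d _⟩
  · rintro x ⟨c, rfl⟩ y ⟨d, rfl⟩ z ⟨e, rfl⟩
    refine ⟨c * (starRingEnd ℂ d * e), ?_⟩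
    rw [LinearIsometryEquiv.map_smulₛₗ ContinuousLinearMap.adjoint, adj_one]
    simp [ContinuousLinearMap.smul_comp, ContinuousLinearMap.comp_smul, one_comp', comp_one',
      smul_smul, mul_comm, mul_left_comm]

lemma isTRO_egM2 : IsTRO egM2 := by
  constructor
  · exact isClosed_smul_set _
  · exact ⟨0, (zero_smul ℂ egE12).symm⟩
  · rintro x ⟨c, rfl⟩ y ⟨d, rfl⟩; exact ⟨c + d, (add_smul c d _).symm⟩
  · rintro c x ⟨d, rfl⟩; exact ⟨c * d, smul_smul c d _⟩
  · rintro x ⟨c, rfl⟩ y ⟨d, rfl⟩ z ⟨e, rfl⟩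
    refine ⟨c * (starRingEnd ℂ d * e), ?_⟩
    rw [LinearIsometryEquiv.map_smulₛₗ ContinuousLinearMap.adjoint, adj_e12]
    simp [ContinuousLinearMap.smul_comp, ContinuousLinearMap.comp_smul, e21_comp_e12,
      e12_comp_e22, smul_smul, mul_comm, mul_left_comm]

end AuxSets


section AuxMain

lemma e12_apply' (v : EuclideanSpace ℂ (Fin 2)) :
    WithLp.ofLp (egE12 v) = fun i : Fin 2 => if i = 0 then v 1 else 0 := by
  funext i
  have : WithLp.ofLp (egE12 v) i = (Matrix.single (0 : Fin 2) 1 (1 : ℂ)).mulVec (WithLp.ofLp v) i := rfl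
  rw [this, Matrix.mulVec]
  simp [Matrix.single, dotProduct]
  fin_cases i <;> simp

lemma e21_apply' (v : EuclideanSpace ℂ (Fin 2)) :
    WithLp.ofLp (egE21 v) = fun i : Fin 2 => if i = 1 then v 0 else 0 := by
  funext i
  have : WithLp.ofLp (egE21 v) i = (Matrix.single (1 : Fin 2) 0 (1 : ℂ)).mulVec (WithLp.ofLp v) i := rfl
  rw [this, Matrix.mulVec]
  simp [Matrix.single, dotProduct]
  fin_cases i <;> simp

set_option synthInstance.maxHeartbeats 400000 in
set_option maxHeartbeats 800000 in
lemma egX_mul : ∀ x ∈ egX, ∀ x' ∈ egX, x.comp x' ∈ egX := by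
  rintro x ⟨c, rfl⟩ x' ⟨c', rfl⟩
  refine ⟨0, ?_⟩
  rw [ContinuousLinearMap.smul_comp, ContinuousLinearMap.comp_smul, e12_comp_e12]
  ext v
  simp

lemma egY_mul : ∀ y ∈ egY, ∀ y' ∈ egY, y.comp y' ∈ egY := by
  rintro y ⟨c, rfl⟩ y' ⟨c', rfl⟩
  exact ⟨c * c', by
    rw [ContinuousLinearMap.smul_comp, ContinuousLinearMap.comp_smul, e22_comp_e22, smul_smul]⟩

lemma eq_clSpan_X : egX = clSpan (setMul (setMul egM2 egY) (adjSet egM1)) := by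
  rw [setMul_egM2_egY, adjSet_egM1, setMul_egX_egM1]
  exact (clSpan_smul_set egE12).symm

lemma eq_clSpan_Y : egY = clSpan (setMul (setMul (adjSet egM2) egX) egM1) := by
  rw [setMul_adj_egM2_egX, setMul_egY_egM1]
  exact (clSpan_smul_set egE22).symm

set_option maxHeartbeats 800000 in
lemma diag_X : egX ∩ adjSet egX = {0} := by
  ext x
  simp only [Set.mem_inter_iff, Set.mem_singleton_iff]
  constructor
  · rintro ⟨⟨c, rfl⟩, s, ⟨d, rfl⟩, heq⟩
    rw [LinearIsometryEquiv.map_smulₛₗ ContinuousLinearMap.adjoint, adj_e12] at heq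
    have h : (c • egE12) (EuclideanSpace.single 1 1) 0 =
        ((starRingEnd ℂ d) • egE21) (EuclideanSpace.single 1 1) 0 :=
      congrArg (fun w : EuclideanSpace ℂ (Fin 2) => w 0)
        (ContinuousLinearMap.ext_iff.mp heq (EuclideanSpace.single 1 1))
    have hl : (c • egE12) (EuclideanSpace.single 1 1) 0 = c := by
      rw [ContinuousLinearMap.smul_apply]
      have : egE12 (EuclideanSpace.single (1 : Fin 2) (1 : ℂ)) 0 = 1 := by
        rw [e12_apply']; simp
      calc (c • egE12 (EuclideanSpace.single (1 : Fin 2) (1 : ℂ))) 0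
          = c • (egE12 (EuclideanSpace.single (1 : Fin 2) (1 : ℂ)) 0) := rfl
      _ = c := by rw [this]; simp
    have hr : ((starRingEnd ℂ d) • egE21) (EuclideanSpace.single 1 1) 0 = 0 := by
      rw [ContinuousLinearMap.smul_apply]
      have : egE21 (EuclideanSpace.single (1 : Fin 2) (1 : ℂ)) 0 = 0 := by
        rw [e21_apply']; simp
      calc ((starRingEnd ℂ d) • egE21 (EuclideanSpace.single (1 : Fin 2) (1 : ℂ))) 0
          = (starRingEnd ℂ d) • (egE21 (EuclideanSpace.single (1 : Fin 2) (1 : ℂ)) 0) := rfl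
      _ = 0 := by rw [this]; simp
    rw [hl, hr] at h
    rw [h]
    exact zero_smul ℂ egE12
  · rintro rfl
    refine ⟨⟨0, (zero_smul ℂ egE12).symm⟩, 0, ⟨0, (zero_smul ℂ egE12).symm⟩, by simp⟩

lemma diag_Y : egY ∩ adjSet egY = egY := by
  ext y
  simp only [Set.mem_inter_iff]
  constructor
  · rintro ⟨h1, _⟩; exact h1
  · rintro ⟨c, rfl⟩
    refine ⟨⟨c, rfl⟩, (starRingEnd ℂ c) • egE22, ⟨starRingEnd ℂ c, rfl⟩, ?_⟩
    rw [LinearIsometryEquiv.map_smulₛₗ ContinuousLinearMap.adjoint, adj_e22]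
    simp

set_option maxHeartbeats 1000000 in
lemma not_delta : ¬ StronglyDeltaEquivAlg egX egY := by
  rintro ⟨G₁, G₂, φ, ψ, M, hφiso, hψiso, hφmul, hψmul, hM, hXeq, hYeq⟩
  have hE12X : egE12 ∈ egX := ⟨1, (one_smul ℂ egE12).symm⟩
  have hE22Y : egE22 ∈ egY := ⟨1, (one_smul ℂ egE22).symm⟩
  set a := φ egE12 with ha
  set b := ψ egE22 with hb
  have hna : ‖a‖ = ‖egE12‖ := by
    have h := hφiso 1 (Matrix.of fun _ _ => egE12) (fun i j => hE12X)
    rw [matOp_one_norm, matOp_one_norm] at h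
    simpa using h
  have hnb : ‖b‖ = ‖egE22‖ := by
    have h := hψiso 1 (Matrix.of fun _ _ => egE22) (fun i j => hE22Y)
    rw [matOp_one_norm, matOp_one_norm] at h
    simpa using h
  have hanz : a ≠ 0 := by
    intro h
    rw [h, norm_zero] at hna
    exact e12_ne_zero ((norm_eq_zero.mp hna.symm))
  have hb1 : ‖b‖ ≤ 1 := hnb ▸ norm_e22_le
  have haa : a.comp a = 0 := by
    have h := hφmul egE12 hE12X egE12 hE12X
    rw [e12_comp_e12, map_zero] at h
    exact h.symm
  have hbb : b.comp b = b := by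
    have h := hψmul egE22 hE22Y egE22 hE22Y
    rw [e22_comp_e22] at h
    exact h.symm
  have hbsa : ContinuousLinearMap.adjoint b = b := adjoint_eq_self_of_idem b hbb hb1
  have hψY : ∀ y ∈ ψ '' egY, ∃ c : ℂ, y = c • b := by
    rintro y ⟨y', ⟨c, rfl⟩, rfl⟩
    exact ⟨c, by rw [map_smul]⟩
  have hψY' : ∀ c : ℂ, c • b ∈ ψ '' egY :=
    fun c => ⟨c • egE22, ⟨c, rfl⟩, by rw [map_smul]⟩
  have hφX : φ '' egX = {x | ∃ c : ℂ, x = c • a} := by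
    ext x
    constructor
    · rintro ⟨x', ⟨c, rfl⟩, rfl⟩
      exact ⟨c, by rw [map_smul]⟩
    · rintro ⟨c, rfl⟩
      exact ⟨c • egE12, ⟨c, rfl⟩, by rw [map_smul]⟩
  set T := setMul (setMul M (ψ '' egY)) (adjSet M) with hTdef
  have hTstar : ∀ t ∈ T, ContinuousLinearMap.adjoint t ∈ T := by
    rintro t ⟨s, ⟨m, hm, y, hy, rfl⟩, t₁, ⟨m', hm', rfl⟩, rfl⟩
    obtain ⟨c, rfl⟩ := hψY y hy
    refine ⟨m'.comp ((starRingEnd ℂ c) • b), ⟨m', hm', _, hψY' _, rfl⟩,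
      ContinuousLinearMap.adjoint m, ⟨m, hm, rfl⟩, ?_⟩
    rw [ContinuousLinearMap.adjoint_comp, ContinuousLinearMap.adjoint_adjoint,
      ContinuousLinearMap.adjoint_comp,
      LinearIsometryEquiv.map_smulₛₗ ContinuousLinearMap.adjoint c b, hbsa,
      ContinuousLinearMap.comp_assoc]
  have haX : a ∈ φ '' egX := ⟨egE12, hE12X, rfl⟩
  have haT : a ∈ clSpan T := by rw [← hXeq]; exact haX
  have hmaps : Set.MapsTo (fun x : (G₁ : Type _) →L[ℂ] (G₁ : Type _) =>
      ContinuousLinearMap.adjoint x)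
      ((Submodule.span ℂ T : Submodule ℂ _) : Set _)
      ((Submodule.span ℂ T : Submodule ℂ _) : Set _) := by
    intro y hy
    simp only [SetLike.mem_coe] at hy ⊢
    refine Submodule.span_induction
      (p := fun x _ => ContinuousLinearMap.adjoint x ∈ Submodule.span ℂ T)
      ?_ ?_ ?_ ?_ hy
    · intro t ht
      exact Submodule.subset_span (hTstar t ht)
    · simp
    · intro u v hu hv hau hav
      rw [map_add]
      exact Submodule.add_mem _ hau hav
    · intro cc u hu hau
      rw [LinearIsometryEquiv.map_smulₛₗ]
      exact Submodule.smul_mem _ _ hau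
  have hcont : Continuous (fun x : (G₁ : Type _) →L[ℂ] (G₁ : Type _) =>
      ContinuousLinearMap.adjoint x) :=
    (ContinuousLinearMap.adjoint :
      ((G₁ : Type _) →L[ℂ] (G₁ : Type _)) ≃ₗᵢ⋆[ℂ] _).continuous
  have hadjT : ContinuousLinearMap.adjoint a ∈ clSpan T :=
    map_mem_closure hcont haT hmaps
  have hadjX : ContinuousLinearMap.adjoint a ∈ φ '' egX := by rw [hXeq]; exact hadjT
  rw [hφX] at hadjX
  obtain ⟨c, hc⟩ := hadjX
  have hcomp : (ContinuousLinearMap.adjoint a).comp a = 0 := by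
    rw [hc, ContinuousLinearMap.smul_comp, haa, smul_zero]
  have hzero : ‖a‖ * ‖a‖ = 0 := by
    rw [← ContinuousLinearMap.norm_adjoint_comp_self a, hcomp, norm_zero]
  exact hanz (norm_eq_zero.mp (mul_self_eq_zero.mp hzero))

end AuxMain

/-- The operator algebras `X = ℂ E₁₂` and `Y = ℂ E₂₂` in `M₂(ℂ)` are
strongly TRO equivalent as operator spaces via `M₁ = ℂ I₂` and `M₂ = ℂ E₁₂`, but they are not
strongly Δ-equivalent as operator algebras; their diagonals are `X ∩ X* = 0` and
`Y ∩ Y* = Y`. -/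
theorem strongTROEquiv_not_deltaEquiv_as_algebras :
    (∀ x ∈ egX, ∀ x' ∈ egX, x.comp x' ∈ egX) ∧
    (∀ y ∈ egY, ∀ y' ∈ egY, y.comp y' ∈ egY) ∧
    IsTRO egM1 ∧ IsTRO egM2 ∧
    egX = clSpan (setMul (setMul egM2 egY) (adjSet egM1)) ∧
    egY = clSpan (setMul (setMul (adjSet egM2) egX) egM1) ∧
    egX ∩ adjSet egX = {0} ∧
    egY ∩ adjSet egY = egY ∧
    ¬ StronglyDeltaEquivAlg egX egY := by
  exact ⟨egX_mul, egY_mul, isTRO_egM1, isTRO_egM2, eq_clSpan_X, eq_clSpan_Y, diag_X, diag_Y,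
    not_delta⟩

end
end
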